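/- arXiv:1706.08431 — 5 statements merged into one kernel-verified Lean document; each statement's English description precedes it below -/
import Mathlib

section
/- Let Φ be a random k-SAT formula on n variables and m clauses drawn from the random k-SAT model with probability vector p sorted non-decreasingly (p_1 ≤ p_2 ≤ … ≤ p_n), where k ≥ 2 is a fixed integer and m/n = Ω(1). If p_{n−k+1} = Ω((log n / n)^{1/k}), then Φ is unsatisfiable with high probability. -/
open Finset Filter
open scoped BigOperators Classical

namespace PLSAT

/-- A clause on `n` variables with `k` literals: each literal is a variable index
together with a sign (`true` = positive occurrence, `false` = negated). -/
abbrev Clause (n k : ℕ) := Fin k → Fin n × Bool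

/-- A CNF formula with `m` clauses, each with `k` literals on `n` variables. -/
abbrev Formula (n m k : ℕ) := Fin m → Clause n k

/-- Assignment `A` satisfies clause `c`. -/
def ClauseSat {n k : ℕ} (A : Fin n → Bool) (c : Clause n k) : Prop :=
  ∃ i, A (c i).1 = (c i).2

/-- Assignment `A` satisfies formula `Φ`. -/
def Sat {n m k : ℕ} (A : Fin n → Bool) (Φ : Formula n m k) : Prop :=
  ∀ j, ClauseSat A (Φ j)

def Satisfiable {n m k : ℕ} (Φ : Formula n m k) : Prop := ∃ A, Sat A Φ

/-- `p` is a probability vector. -/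
def IsProbVec (n : ℕ) (p : Fin n → ℝ) : Prop := (∀ i, 0 ≤ p i) ∧ ∑ i, p i = 1

/-- Normalizing constant: the probability that `k` i.i.d. draws from `p` are pairwise
distinct (sum over ordered injective tuples of the product of probabilities). -/
noncomputable def Z (n k : ℕ) (p : Fin n → ℝ) : ℝ :=
  ∑ v : Fin k → Fin n, if Function.Injective v then ∏ i, p (v i) else 0

/-- Probability of sampling the (ordered, signed) clause `c`: the `k` variables are
i.i.d. from `p` conditioned on being pairwise distinct, and each sign is uniform. -/
noncomputable def clauseProb (n k : ℕ) (p : Fin n → ℝ) (c : Clause n k) : ℝ :=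
  (if Function.Injective (fun i => (c i).1) then ∏ i, p (c i).1 else 0) / (2 ^ k * Z n k p)

/-- Probability of sampling the formula `Φ` (clauses independent). -/
noncomputable def formulaProb (n m k : ℕ) (p : Fin n → ℝ) (Φ : Formula n m k) : ℝ :=
  ∏ j, clauseProb n k p (Φ j)

/-- Probability of the event `P` under the random `k`-SAT model. -/
noncomputable def Pr (n m k : ℕ) (p : Fin n → ℝ) (P : Formula n m k → Prop) : ℝ :=
  ∑ Φ : Formula n m k, if P Φ then formulaProb n m k p Φ else 0

/-- Smallest weight `w₁` (weights are sorted non-decreasingly). -/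
noncomputable def wmin (n : ℕ) (w : Fin n → ℝ) : ℝ :=
  if h : 0 < n then w ⟨0, h⟩ else 0

/-- Largest weight `wₙ`. -/
noncomputable def wmax (n : ℕ) (w : Fin n → ℝ) : ℝ :=
  if h : 0 < n then w ⟨n - 1, Nat.sub_lt h one_pos⟩ else 0

/-- Empirical tail function `F(x) = |{i : wᵢ ≥ x}| / n`. -/
noncomputable def tailF (n : ℕ) (w : Fin n → ℝ) (x : ℝ) : ℝ :=
  ((Finset.univ.filter fun i => x ≤ w i).card : ℝ) / n

/-- Strict empirical tail function `F^>(x) = |{i : wᵢ > x}| / n`. -/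
noncomputable def tailFgt (n : ℕ) (w : Fin n → ℝ) (x : ℝ) : ℝ :=
  ((Finset.univ.filter fun i => x < w i).card : ℝ) / n

/-- The family `w` of weight sequences follows a general power law with exponent `β`
and tail constants `α₁ ≤ α₂`: the weights are sorted non-decreasingly and positive,
`w₁ = Θ(1)`, `wₙ = Θ(n^{1/(β-1)})`, and for all `x ∈ [w₁, wₙ]` it holds
`α₁ x^{1-β} ≤ F(x) ≤ α₂ x^{1-β}`. -/
structure IsPowerLawFamily (β α₁ α₂ : ℝ) (w : (n : ℕ) → Fin n → ℝ) : Prop where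
  mono : ∀ n, Monotone (w n)
  pos : ∀ n i, 0 < w n i
  α₁_pos : 0 < α₁
  α₁_le_α₂ : α₁ ≤ α₂
  wmin_theta : ∃ c₁ c₂ : ℝ, 0 < c₁ ∧ ∀ᶠ n in atTop,
      c₁ ≤ wmin n (w n) ∧ wmin n (w n) ≤ c₂
  wmax_theta : ∃ d₁ d₂ : ℝ, 0 < d₁ ∧ ∀ᶠ n : ℕ in atTop,
      d₁ * (n : ℝ) ^ (1 / (β - 1)) ≤ wmax n (w n) ∧
      wmax n (w n) ≤ d₂ * (n : ℝ) ^ (1 / (β - 1))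
  tail : ∀ n, 0 < n → ∀ x : ℝ, wmin n (w n) ≤ x → x ≤ wmax n (w n) →
      α₁ * x ^ (1 - β) ≤ tailF n (w n) x ∧ tailF n (w n) x ≤ α₂ * x ^ (1 - β)

/-- Probabilities induced by weights: `pᵢ = wᵢ / ∑ⱼ wⱼ`. -/
noncomputable def plp (n : ℕ) (w : Fin n → ℝ) (i : Fin n) : ℝ := w i / ∑ j, w j

section Aux

variable {n m k : ℕ} {p : Fin n → ℝ}

lemma Z_nonneg (h0 : ∀ i, 0 ≤ p i) : 0 ≤ Z n k p := by
  apply Finset.sum_nonneg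
  intro v _
  split
  · exact Finset.prod_nonneg fun i _ => h0 _
  · exact le_refl 0

lemma clauseProb_nonneg (h0 : ∀ i, 0 ≤ p i) (c : Clause n k) : 0 ≤ clauseProb n k p c := by
  unfold clauseProb
  apply div_nonneg
  · split
    · exact Finset.prod_nonneg fun i _ => h0 _
    · exact le_refl 0
  · exact mul_nonneg (by positivity) (Z_nonneg h0)

lemma sum_num :
    ∑ c : Clause n k, (if Function.Injective (fun i => (c i).1) then ∏ i, p (c i).1 else 0)
      = 2 ^ k * Z n k p := by
  rw [← Equiv.sum_comp (Equiv.arrowProdEquivProdArrow (Fin k) (fun _ => Fin n) (fun _ => Bool)).symm, Fintype.sum_prod_type]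
  show ∑ x : Fin k → Fin n, ∑ y : Fin k → Bool, (if Function.Injective x then ∏ i, p (x i) else 0) = _
  simp only [Finset.sum_const, Finset.card_univ, nsmul_eq_mul]
  rw [Z, Finset.mul_sum]
  apply Finset.sum_congr rfl
  intro v _
  simp [Fintype.card_fun]

lemma sum_clauseProb (h0 : ∀ i, 0 ≤ p i) (hZ : 0 < Z n k p) :
    ∑ c : Clause n k, clauseProb n k p c = 1 := by
  unfold clauseProb
  rw [← Finset.sum_div, sum_num]
  exact div_self (ne_of_gt (mul_pos (by positivity) hZ))

lemma clauseProb_le_one (h0 : ∀ i, 0 ≤ p i) (hZ : 0 < Z n k p) (c : Clause n k) :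
    clauseProb n k p c ≤ 1 := by
  rw [← sum_clauseProb h0 hZ]
  exact Finset.single_le_sum (fun c' _ => clauseProb_nonneg h0 c') (Finset.mem_univ c)

lemma Pr_miss (h0 : ∀ i, 0 ≤ p i) (hZ : 0 < Z n k p) (c₀ : Clause n k) :
    Pr n m k p (fun Φ => ∀ j, Φ j ≠ c₀) = (1 - clauseProb n k p c₀) ^ m := by
  have hsum : ∑ c : Clause n k, (if c = c₀ then 0 else clauseProb n k p c)
      = 1 - clauseProb n k p c₀ := by
    have h1 := sum_clauseProb (n := n) (k := k) h0 hZ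
    have he : ∀ c : Clause n k, (if c = c₀ then 0 else clauseProb n k p c)
        = clauseProb n k p c - (if c = c₀ then clauseProb n k p c else 0) := by
      intro c; split <;> simp
    rw [Finset.sum_congr rfl fun c _ => he c, Finset.sum_sub_distrib, h1,
      Finset.sum_ite_eq' Finset.univ c₀]
    simp
  rw [Pr]
  trans (∑ Φ : Formula n m k, ∏ j, (if Φ j = c₀ then 0 else clauseProb n k p (Φ j)))
  · exact Finset.sum_congr rfl fun Φ _ => by
      by_cases h : ∀ j, Φ j ≠ c₀
      · rw [if_pos h]
        exact Finset.prod_congr rfl fun j _ => (if_neg (h j)).symm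
      · rw [if_neg h]
        push_neg at h
        obtain ⟨j0, hj0⟩ := h
        exact (Finset.prod_eq_zero (Finset.mem_univ j0) (by rw [if_pos hj0])).symm
  · rw [← Fintype.sum_pow (fun c : Clause n k => if c = c₀ then 0 else clauseProb n k p c) m,
      hsum]

/-- The `i`-th heaviest variable. -/
def heavy (n k : ℕ) (h : k ≤ n) (i : Fin k) : Fin n := ⟨n - k + i.1, by have := i.2; omega⟩

lemma heavy_inj (h : k ≤ n) : Function.Injective (heavy n k h) := by
  intro a b hab
  have : n - k + a.1 = n - k + b.1 := congrArg Fin.val hab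
  exact Fin.ext (by omega)

lemma Z_pos (h0 : ∀ i, 0 ≤ p i) (hkn : k ≤ n)
    (hpos : ∀ i : Fin k, 0 < p (heavy n k hkn i)) : 0 < Z n k p := by
  have h1 : (0:ℝ) < ∏ i, p (heavy n k hkn i) := Finset.prod_pos fun i _ => hpos i
  calc (0:ℝ) < ∏ i, p (heavy n k hkn i) := h1
    _ = if Function.Injective (heavy n k hkn) then ∏ i, p (heavy n k hkn i) else 0 := by
        rw [if_pos (heavy_inj hkn)]
    _ ≤ Z n k p := Finset.single_le_sum (f := fun v : Fin k → Fin n =>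
        if Function.Injective v then ∏ i, p (v i) else 0)
        (fun v _ => by split
                       · exact Finset.prod_nonneg fun i _ => h0 _
                       · exact le_refl 0)
        (Finset.mem_univ _)

lemma Z_le_one (h0 : ∀ i, 0 ≤ p i) (h1 : ∑ i, p i = 1) : Z n k p ≤ 1 := by
  rw [Z]
  calc ∑ v : Fin k → Fin n, (if Function.Injective v then ∏ i, p (v i) else 0)
      ≤ ∑ v : Fin k → Fin n, ∏ i, p (v i) := by
        apply Finset.sum_le_sum
        intro v _
        split
        · exact le_refl _
        · exact Finset.prod_nonneg fun i _ => h0 _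
    _ = (∑ j, p j) ^ k := by rw [Fintype.sum_pow p k]
    _ = 1 := by rw [h1]; simp

/-- The heavy clause with sign pattern `s`. -/
def heavyClause (n k : ℕ) (h : k ≤ n) (s : Fin k → Bool) : Clause n k :=
  fun i => (heavy n k h i, s i)

lemma unsat_of_all_patterns (hkn : k ≤ n) (Φ : Formula n m k)
    (h : ∀ s : Fin k → Bool, ∃ j, Φ j = heavyClause n k hkn s) : ¬ Satisfiable Φ := by
  rintro ⟨A, hA⟩
  obtain ⟨j, hj⟩ := h (fun i => ! A (heavy n k hkn i))
  obtain ⟨i, hi⟩ := hA j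
  rw [hj] at hi
  simp [heavyClause] at hi

lemma clauseProb_heavyClause (hkn : k ≤ n) (s : Fin k → Bool) :
    clauseProb n k p (heavyClause n k hkn s)
      = (∏ i, p (heavy n k hkn i)) / (2 ^ k * Z n k p) := by
  have h1 : Function.Injective (fun i => ((heavyClause n k hkn s) i).1) := by
    simpa [heavyClause] using heavy_inj hkn
  rw [clauseProb, if_pos h1]
  rfl

lemma Pr_sat_le (h0 : ∀ i, 0 ≤ p i) (hZ : 0 < Z n k p) (hkn : k ≤ n) :
    Pr n m k p (fun Φ => Satisfiable Φ)
      ≤ 2 ^ k * (1 - (∏ i, p (heavy n k hkn i)) / (2 ^ k * Z n k p)) ^ m := by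
  have hfp : ∀ Φ : Formula n m k, 0 ≤ formulaProb n m k p Φ := fun Φ =>
    Finset.prod_nonneg fun j _ => clauseProb_nonneg h0 _
  have step1 : Pr n m k p (fun Φ => Satisfiable Φ)
      ≤ ∑ s : Fin k → Bool, Pr n m k p (fun Φ => ∀ j, Φ j ≠ heavyClause n k hkn s) := by
    rw [Pr]
    simp only [Pr]
    rw [Finset.sum_comm]
    apply Finset.sum_le_sum
    intro Φ _
    by_cases hS : Satisfiable Φ
    · rw [if_pos hS]
      have hex : ∃ s : Fin k → Bool, ∀ j, Φ j ≠ heavyClause n k hkn s := by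
        by_contra hcon
        push_neg at hcon
        exact unsat_of_all_patterns hkn Φ (fun s => hcon s) hS
      obtain ⟨s0, hs0⟩ := hex
      refine le_trans ?_ (Finset.single_le_sum (fun s _ => ?_) (Finset.mem_univ s0))
      · exact le_of_eq (if_pos hs0).symm
      · split
        · exact hfp Φ
        · exact le_refl 0
    · rw [if_neg hS]
      apply Finset.sum_nonneg
      intro s _
      split
      · exact hfp Φ
      · exact le_refl 0
  calc Pr n m k p (fun Φ => Satisfiable Φ)
      ≤ ∑ s : Fin k → Bool, Pr n m k p (fun Φ => ∀ j, Φ j ≠ heavyClause n k hkn s) := step1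
    _ = ∑ _s : Fin k → Bool,
          (1 - (∏ i, p (heavy n k hkn i)) / (2 ^ k * Z n k p)) ^ m := by
        apply Finset.sum_congr rfl
        intro s _
        rw [Pr_miss h0 hZ, clauseProb_heavyClause hkn s]
    _ = 2 ^ k * (1 - (∏ i, p (heavy n k hkn i)) / (2 ^ k * Z n k p)) ^ m := by
        rw [Finset.sum_const, Finset.card_univ, nsmul_eq_mul]
        norm_num [Fintype.card_fun]

end Aux

/-- If the `k` most frequent variables are sufficiently common, namely
`p_{n-k+1} = Ω((log n / n)^{1/k})` (with `p` sorted non-decreasingly), and `m/n = Ω(1)`,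
then the random `k`-SAT formula is unsatisfiable with high probability. -/
theorem power_law_unsat_of_heavy_variables (k : ℕ) (hk : 2 ≤ k)
    (m : ℕ → ℕ) (p : (n : ℕ) → Fin n → ℝ)
    (hprob : ∀ n, IsProbVec n (p n))
    (hsorted : ∀ n, Monotone (p n))
    (hm : ∃ c : ℝ, 0 < c ∧ ∀ᶠ n : ℕ in atTop, c * (n : ℝ) ≤ (m n : ℝ))
    (hpk : ∃ c : ℝ, 0 < c ∧ ∀ᶠ n : ℕ in atTop, ∀ h : k ≤ n,
      c * (Real.log n / n) ^ ((1 : ℝ) / k) ≤ p n ⟨n - k, by omega⟩) :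
    ∃ δ : ℝ, 0 < δ ∧ ∃ C : ℝ, ∀ᶠ n : ℕ in atTop,
      Pr n (m n) k (p n) (fun Φ => Satisfiable Φ) ≤ C * (n : ℝ) ^ (-δ) := by
  obtain ⟨c₁, hc₁, hm2⟩ := hm
  obtain ⟨c, hc, hpk2⟩ := hpk
  have h2kpos : (0:ℝ) < 2 ^ k := by positivity
  refine ⟨c₁ * (c ^ k / 2 ^ k),
    mul_pos hc₁ (div_pos (pow_pos hc k) h2kpos), (2:ℝ) ^ k, ?_⟩
  set δ : ℝ := c₁ * (c ^ k / 2 ^ k) with hδ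
  filter_upwards [hm2, hpk2, eventually_ge_atTop k, eventually_ge_atTop 2]
    with n hmn hpn hkn h2n
  have h0 : ∀ i, 0 ≤ p n i := (hprob n).1
  have h1 : ∑ i, p n i = 1 := (hprob n).2
  have hnpos : (0:ℝ) < n := by
    have : 0 < n := by omega
    exact_mod_cast this
  have hn1 : (1:ℝ) < n := by exact_mod_cast Nat.lt_of_lt_of_le one_lt_two h2n
  have hlogpos : 0 < Real.log n := Real.log_pos hn1
  have hx : (0:ℝ) < Real.log n / n := div_pos hlogpos hnpos
  have hkR : ((k:ℝ)) ≠ 0 := by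
    have : 0 < k := by omega
    exact_mod_cast Nat.pos_iff_ne_zero.mp this
  have hbase : c * (Real.log n / n) ^ ((1:ℝ)/k) ≤ p n ⟨n - k, by omega⟩ := hpn hkn
  have hheavy : ∀ i : Fin k, c * (Real.log n / n) ^ ((1:ℝ)/k) ≤ p n (heavy n k hkn i) := by
    intro i
    refine le_trans hbase (hsorted n ?_)
    exact Fin.mk_le_mk.mpr (Nat.le_add_right _ _)
  have hbpos : 0 < c * (Real.log n / n) ^ ((1:ℝ)/k) :=
    mul_pos hc (Real.rpow_pos_of_pos hx _)
  have hZpos : 0 < Z n k (p n) :=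
    Z_pos h0 hkn (fun i => lt_of_lt_of_le hbpos (hheavy i))
  have hZle : Z n k (p n) ≤ 1 := Z_le_one h0 h1
  set P : ℝ := ∏ i, p n (heavy n k hkn i) with hP
  have hPpos : 0 < P :=
    Finset.prod_pos fun i _ => lt_of_lt_of_le hbpos (hheavy i)
  set q : ℝ := P / (2 ^ k * Z n k (p n)) with hqdef
  have hq_nonneg : 0 ≤ q := div_nonneg hPpos.le (mul_nonneg h2kpos.le hZpos.le)
  have hq_le_one : q ≤ 1 := by
    rw [hqdef, ← clauseProb_heavyClause (p := p n) hkn (fun _ => true)]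
    exact clauseProb_le_one h0 hZpos _
  have hPge : c ^ k * (Real.log n / n) ≤ P := by
    calc c ^ k * (Real.log n / n)
        = (c * (Real.log n / n) ^ ((1:ℝ)/k)) ^ k := by
          rw [mul_pow, ← Real.rpow_natCast ((Real.log n / n) ^ ((1:ℝ)/k)) k,
            ← Real.rpow_mul hx.le, one_div_mul_cancel hkR, Real.rpow_one]
      _ = ∏ _i : Fin k, (c * (Real.log n / n) ^ ((1:ℝ)/k)) := by
          rw [Finset.prod_const, Finset.card_univ, Fintype.card_fin]
      _ ≤ P := Finset.prod_le_prod (fun i _ => hbpos.le) (fun i _ => hheavy i)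
  have hq_lb : c ^ k * (Real.log n / n) / 2 ^ k ≤ q := by
    rw [hqdef]
    calc c ^ k * (Real.log n / n) / 2 ^ k ≤ P / 2 ^ k := by gcongr
      _ = P / (2 ^ k * 1) := by rw [mul_one]
      _ ≤ P / (2 ^ k * Z n k (p n)) := by
          gcongr
  have hqm : δ * Real.log n ≤ q * m n := by
    have heq : δ * Real.log n = (c ^ k * (Real.log n / n) / 2 ^ k) * (c₁ * n) := by
      rw [hδ]
      field_simp
    rw [heq]
    exact mul_le_mul hq_lb hmn (by positivity) hq_nonneg
  calc Pr n (m n) k (p n) (fun Φ => Satisfiable Φ)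
      ≤ 2 ^ k * (1 - q) ^ m n := Pr_sat_le h0 hZpos hkn
    _ ≤ 2 ^ k * (Real.exp (-q)) ^ m n := by
        gcongr
        · linarith [Real.add_one_le_exp (-q)]
    _ = 2 ^ k * Real.exp (-(q * m n)) := by
        rw [← Real.exp_nat_mul]
        congr 1
        ring_nf
    _ ≤ 2 ^ k * Real.exp (-(δ * Real.log n)) := by
        gcongr
    _ = 2 ^ k * (n:ℝ) ^ (-δ) := by
        rw [Real.rpow_def_of_pos hnpos]
        congr 1
        ring_nf
end PLSAT
end

section
/- Let w_1 ≤ … ≤ w_n be general power-law weights with exponent β > 2, with induced probabilities p_i := w_i/∑_j w_j, and let I be a random index with Pr[I = i] = p_i. Then, uniformly for all w ∈ [w_1, w_n], Pr[w_I ≥ w] = Θ(w^{2−β}). -/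
open Finset Filter
open scoped BigOperators Classical

namespace PLSAT

private lemma dyadic_sum_le (β α₂ : ℝ) (hβ : 2 < β) (hα₂ : 0 < α₂)
    (n : ℕ) (hn : 0 < n) (w : Fin n → ℝ)
    (hle : ∀ i, w i ≤ wmax n w)
    (htail : ∀ x : ℝ, wmin n w ≤ x → x ≤ wmax n w → tailF n w x ≤ α₂ * x ^ (1 - β)) :
    ∀ K : ℕ, ∀ x : ℝ, 0 < x → wmin n w ≤ x → wmax n w < 2 ^ K * x →
      ∑ i ∈ Finset.univ.filter (fun i => x ≤ w i), w i ≤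
        2 * α₂ / (1 - 2 ^ (2 - β)) * n * x ^ (2 - β) := by
  have ht1 : (2:ℝ) ^ (2 - β) < 1 :=
    Real.rpow_lt_one_of_one_lt_of_neg one_lt_two (by linarith)
  have hcpos : 0 < 2 * α₂ / (1 - (2:ℝ) ^ (2 - β)) :=
    div_pos (by linarith) (by linarith)
  intro K
  induction K with
  | zero =>
    intro x hx0 hx1 hK
    have hemp : (Finset.univ.filter fun i => x ≤ w i) = ∅ := by
      rw [Finset.filter_eq_empty_iff]
      intro i _
      push_neg
      calc w i ≤ wmax n w := hle i
        _ < 2 ^ 0 * x := hK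
        _ = x := by ring
    rw [hemp, Finset.sum_empty]
    have := Real.rpow_pos_of_pos hx0 (2 - β)
    positivity
  | succ K ih =>
    intro x hx0 hx1 hK
    by_cases hcase : wmax n w < x
    · have hemp : (Finset.univ.filter fun i => x ≤ w i) = ∅ := by
        rw [Finset.filter_eq_empty_iff]
        intro i _
        push_neg
        exact lt_of_le_of_lt (hle i) hcase
      rw [hemp, Finset.sum_empty]
      have := Real.rpow_pos_of_pos hx0 (2 - β)
      positivity
    push_neg at hcase
    -- split the sum
    set s := Finset.univ.filter fun i => x ≤ w i with hs
    rw [← Finset.sum_filter_add_sum_filter_not s (fun i => 2 * x ≤ w i)]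
    have hsub : s.filter (fun i => 2 * x ≤ w i) =
        Finset.univ.filter fun i => 2 * x ≤ w i := by
      rw [hs, Finset.filter_filter]
      apply Finset.filter_congr
      intro i _
      constructor
      · exact fun h => h.2
      · exact fun h => ⟨le_trans (by linarith) h, h⟩
    have hcard : ((s.filter fun i => ¬ 2 * x ≤ w i).card : ℝ) ≤ α₂ * x ^ (1 - β) * n := by
      have h1 : ((s.filter fun i => ¬ 2 * x ≤ w i).card : ℝ) ≤ (s.card : ℝ) := by
        exact_mod_cast Finset.card_le_card (Finset.filter_subset _ _)
      have h2 : tailF n w x ≤ α₂ * x ^ (1 - β) := htail x hx1 hcase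
      rw [tailF] at h2
      have hn' : (0:ℝ) < n := by exact_mod_cast hn
      rw [div_le_iff₀ hn'] at h2
      exact le_trans h1 h2
    have hpiece1 : ∑ i ∈ s.filter (fun i => ¬ 2 * x ≤ w i), w i ≤
        α₂ * x ^ (1 - β) * n * (2 * x) := by
      calc ∑ i ∈ s.filter (fun i => ¬ 2 * x ≤ w i), w i
          ≤ (s.filter fun i => ¬ 2 * x ≤ w i).card • (2 * x) := by
            apply Finset.sum_le_card_nsmul
            intro i hi
            simp only [Finset.mem_filter] at hi
            linarith [hi.2]
        _ = ((s.filter fun i => ¬ 2 * x ≤ w i).card : ℝ) * (2 * x) := by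
            rw [nsmul_eq_mul]
        _ ≤ α₂ * x ^ (1 - β) * n * (2 * x) := by
            apply mul_le_mul_of_nonneg_right hcard (by linarith)
    have hpiece2 : ∑ i ∈ s.filter (fun i => 2 * x ≤ w i), w i ≤
        2 * α₂ / (1 - 2 ^ (2 - β)) * n * (2 * x) ^ (2 - β) := by
      rw [hsub]
      exact ih (2 * x) (by linarith) (by linarith)
        (by rw [show (2:ℝ) ^ (K + 1) * x = 2 ^ K * (2 * x) by ring] at hK; exact hK)
    have hxe : x ^ (1 - β) * x = x ^ (2 - β) := by
      rw [show (2 - β) = (1 - β) + 1 by ring, Real.rpow_add hx0, Real.rpow_one]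
    have h2x : ((2:ℝ) * x) ^ (2 - β) = 2 ^ (2 - β) * x ^ (2 - β) :=
      Real.mul_rpow (by norm_num) hx0.le
    have hct : 2 * α₂ + (2 * α₂ / (1 - 2 ^ (2 - β))) * (2:ℝ) ^ (2 - β) =
        2 * α₂ / (1 - 2 ^ (2 - β)) := by
      have hne : (1:ℝ) - 2 ^ (2 - β) ≠ 0 := by linarith
      field_simp
      ring
    have hfin : α₂ * x ^ (1 - β) * n * (2 * x) +
        2 * α₂ / (1 - 2 ^ (2 - β)) * n * (2 * x) ^ (2 - β) =
        2 * α₂ / (1 - 2 ^ (2 - β)) * n * x ^ (2 - β) := by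
      rw [h2x]
      rw [show α₂ * x ^ (1 - β) * n * (2 * x) = 2 * α₂ * (x ^ (1-β) * x) * n by ring, hxe]
      linear_combination ((n:ℝ) * x ^ (2 - β)) * hct
    linarith [hpiece1, hpiece2]
/-- For power-law weights with exponent `β > 2` and the induced
probabilities `pᵢ = wᵢ/∑ⱼwⱼ`, the probability that a random index `I ∼ p` has weight
at least `x` is `Θ(x^{2-β})`, uniformly for `x ∈ [w₁, wₙ]`. -/
theorem weighted_tail_theta (β α₁ α₂ : ℝ) (hβ : 2 < β)
    (w : (n : ℕ) → Fin n → ℝ) (hw : IsPowerLawFamily β α₁ α₂ w) :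
    ∃ C₁ C₂ : ℝ, 0 < C₁ ∧ ∀ᶠ n : ℕ in atTop, ∀ x : ℝ,
      wmin n (w n) ≤ x → x ≤ wmax n (w n) →
      C₁ * x ^ (2 - β) ≤
          (∑ i ∈ Finset.univ.filter (fun i => x ≤ w n i), plp n (w n) i) ∧
      (∑ i ∈ Finset.univ.filter (fun i => x ≤ w n i), plp n (w n) i)
          ≤ C₂ * x ^ (2 - β) := by
  obtain ⟨c₁, c₂, hc₁, hminev⟩ := hw.wmin_theta
  have hα₂ : 0 < α₂ := lt_of_lt_of_le hw.α₁_pos hw.α₁_le_α₂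
  have ht1 : (2:ℝ) ^ (2 - β) < 1 :=
    Real.rpow_lt_one_of_one_lt_of_neg one_lt_two (by linarith)
  set c : ℝ := 2 * α₂ / (1 - 2 ^ (2 - β)) with hc
  have hcpos : 0 < c := div_pos (by linarith) (by linarith)
  have hc₁r : 0 < c₁ ^ (2 - β) := Real.rpow_pos_of_pos hc₁ _
  refine ⟨α₁ / (c * c₁ ^ (2 - β)), c / c₁, div_pos hw.α₁_pos (mul_pos hcpos hc₁r), ?_⟩
  filter_upwards [hminev, eventually_gt_atTop 0] with n hmin hn
  intro x hx1 hx2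
  set v := w n with hv
  have hminpos : 0 < wmin n v := by
    rw [wmin, dif_pos hn]; exact hw.pos n _
  have hx0 : 0 < x := lt_of_lt_of_le hminpos hx1
  have hge : ∀ i, wmin n v ≤ v i := by
    intro i
    rw [wmin, dif_pos hn]
    apply hw.mono n
    rw [Fin.le_def]
    exact Nat.zero_le _
  have hle : ∀ i, v i ≤ wmax n v := by
    intro i
    rw [wmax, dif_pos hn]
    apply hw.mono n
    rw [Fin.le_def]
    show i.val ≤ n - 1
    have := i.isLt
    omega
  have htailu : ∀ y : ℝ, wmin n v ≤ y → y ≤ wmax n v → tailF n v y ≤ α₂ * y ^ (1 - β) :=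
    fun y h1 h2 => (hw.tail n hn y h1 h2).2
  -- archimedean: choose K with wmax < 2^K * wmin
  obtain ⟨K, hK⟩ := pow_unbounded_of_one_lt (wmax n v / wmin n v) (one_lt_two (α := ℝ))
  have hKmin : wmax n v < 2 ^ K * wmin n v := by
    rw [div_lt_iff₀ hminpos] at hK
    linarith [hK]
  have hKx : wmax n v < 2 ^ K * x := by
    calc wmax n v < 2 ^ K * wmin n v := hKmin
      _ ≤ 2 ^ K * x := by
          apply mul_le_mul_of_nonneg_left hx1 (by positivity)
  set W : ℝ := ∑ j, v j with hW
  have hnR : (0:ℝ) < n := by exact_mod_cast hn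
  have hWlow : c₁ * n ≤ W := by
    calc c₁ * n ≤ wmin n v * n := by
          apply mul_le_mul_of_nonneg_right hmin.1 hnR.le
      _ = (Finset.univ : Finset (Fin n)).card • wmin n v := by
          simp [nsmul_eq_mul, mul_comm]
      _ ≤ W := Finset.card_nsmul_le_sum _ _ _ (fun i _ => hge i)
  have hWpos : 0 < W := lt_of_lt_of_le (by positivity) hWlow
  have hWup : W ≤ c * c₁ ^ (2 - β) * n := by
    have h1 : W = ∑ i ∈ Finset.univ.filter (fun i => wmin n v ≤ v i), v i := by
      rw [Finset.filter_true_of_mem (fun i _ => hge i)]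
    have h2 := dyadic_sum_le β α₂ hβ hα₂ n hn v hle htailu K (wmin n v) hminpos le_rfl hKmin
    rw [← h1] at h2
    have h3 : wmin n v ^ (2 - β) ≤ c₁ ^ (2 - β) :=
      Real.rpow_le_rpow_of_nonpos hc₁ hmin.1 (by linarith)
    calc W ≤ c * n * wmin n v ^ (2 - β) := h2
      _ ≤ c * n * c₁ ^ (2 - β) := by
          apply mul_le_mul_of_nonneg_left h3 (by positivity)
      _ = c * c₁ ^ (2 - β) * n := by ring
  -- tail sum S
  set S : ℝ := ∑ i ∈ Finset.univ.filter (fun i => x ≤ v i), v i with hS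
  have hSup : S ≤ c * n * x ^ (2 - β) :=
    dyadic_sum_le β α₂ hβ hα₂ n hn v hle htailu K x hx0 hx1 hKx
  have hxr : 0 < x ^ (2 - β) := Real.rpow_pos_of_pos hx0 _
  have hSlow : α₁ * n * x ^ (2 - β) ≤ S := by
    have hcard : α₁ * x ^ (1 - β) * n ≤
        ((Finset.univ.filter fun i => x ≤ v i).card : ℝ) := by
      have := (hw.tail n hn x hx1 hx2).1
      rw [tailF, le_div_iff₀ hnR] at this
      exact this
    have hxe : x ^ (1 - β) * x = x ^ (2 - β) := by
      rw [show (2 - β) = (1 - β) + 1 by ring, Real.rpow_add hx0, Real.rpow_one]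
    calc α₁ * n * x ^ (2 - β) = (α₁ * x ^ (1 - β) * n) * x := by
          rw [← hxe]; ring
      _ ≤ ((Finset.univ.filter fun i => x ≤ v i).card : ℝ) * x := by
          apply mul_le_mul_of_nonneg_right hcard hx0.le
      _ = (Finset.univ.filter fun i => x ≤ v i).card • x := by rw [nsmul_eq_mul]
      _ ≤ S := Finset.card_nsmul_le_sum _ _ _ (by
          intro i hi
          exact (Finset.mem_filter.mp hi).2)
  have hsum : (∑ i ∈ Finset.univ.filter (fun i => x ≤ v i), plp n v i) = S / W := by
    rw [hS, Finset.sum_div]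
    apply Finset.sum_congr rfl
    intro i _
    rfl
  rw [hsum]
  constructor
  · have h := div_le_div₀ (a := α₁ * n * x ^ (2 - β)) (b := c * c₁ ^ (2 - β) * n)
      (c := S) (d := W)
      (le_trans (mul_nonneg (mul_nonneg hw.α₁_pos.le hnR.le) hxr.le) hSlow) hSlow hWpos hWup
    calc α₁ / (c * c₁ ^ (2 - β)) * x ^ (2 - β)
        = α₁ * n * x ^ (2 - β) / (c * c₁ ^ (2 - β) * n) := by
          field_simp
      _ ≤ S / W := h
  · have h := div_le_div₀ (a := S) (b := W) (c := c * n * x ^ (2 - β)) (d := c₁ * n)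
      (by positivity) hSup (by positivity) hWlow
    calc S / W ≤ c * n * x ^ (2 - β) / (c₁ * n) := h
      _ = c / c₁ * x ^ (2 - β) := by
          field_simp

end PLSAT
end

section
/- Fix k ≥ 2 and β > 2, and let the variable probabilities be induced by general power-law weights with exponent β. Let c be a single random clause drawn from the random k-SAT model, and let ℓ₁ and ℓ₂ be the literals of c whose variables have the smallest and second-smallest weights, respectively. Then for all variable indices i, j: Pr[|ℓ₁| = i and |ℓ₂| = j] + Pr[|ℓ₁| = j and |ℓ₂| = i] ≤ O((1/n²)·(w_i·w_j)^{1−(1/2)(k−2)(β−2)}), where the implicit constant is independent of i, j, and n. -/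
open Finset Filter
open scoped BigOperators Classical

namespace PLSAT

/-- The set of variables appearing in the clause `c`. -/
noncomputable def varSet {n k : ℕ} (c : Clause n k) : Finset (Fin n) :=
  Finset.univ.image fun t => (c t).1

/-- `i` and `j` are the variables of smallest resp. second-smallest weight in `c`
(weights are sorted non-decreasingly in the index, so taking the smallest and
second-smallest *indices* realizes the weight-argmin with ties broken by index). -/
def IsMinPair {n k : ℕ} (c : Clause n k) (i j : Fin n) : Prop :=
  i ∈ varSet c ∧ j ∈ varSet c ∧ i < j ∧
    (∀ t ∈ varSet c, i ≤ t) ∧ (∀ t ∈ varSet c, t ≠ i → j ≤ t)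

/-- Probability of an event for a single random clause. -/
noncomputable def PrClause (n k : ℕ) (p : Fin n → ℝ) (P : Clause n k → Prop) : ℝ :=
  ∑ c : Clause n k, if P c then clauseProb n k p c else 0


set_option maxHeartbeats 1000000

theorem sum_rpow_neg_le (γ : ℝ) (h0 : 0 < γ) (h1 : γ < 1) (R : ℕ) :
    ∑ r ∈ Finset.Icc 1 R, (r:ℝ) ^ (-γ) ≤ (R:ℝ) ^ (1-γ) / (1-γ) := by
  have hs0 : (0:ℝ) < 1 - γ := by linarith
  induction R with
  | zero => simp [Real.zero_rpow (by linarith : (1:ℝ) - γ ≠ 0)]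
  | succ R ih =>
      rw [Finset.sum_Icc_succ_top (by omega : 1 ≤ R + 1)]
      have hRn : (0:ℝ) ≤ (R:ℝ) := Nat.cast_nonneg R
      have hr1 : (1:ℝ) ≤ (R:ℝ) + 1 := by linarith
      have hr0 : (0:ℝ) < (R:ℝ) + 1 := by linarith
      have key : ((R:ℝ)+1) ^ (-γ) * (1-γ) ≤ ((R:ℝ)+1) ^ (1-γ) - (R:ℝ) ^ (1-γ) := by
        set r : ℝ := (R:ℝ) + 1 with hr
        have hb : (1 + (-(1/r))) ^ (1-γ) ≤ 1 + (1-γ) * (-(1/r)) :=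
          rpow_one_add_le_one_add_mul_self
            (by rw [neg_le, neg_neg]; exact (div_le_one hr0).2 hr1) hs0.le (by linarith)
        have h2 : (R:ℝ) = r * (1 + (-(1/r))) := by field_simp; linarith
        have h3 : (R:ℝ) ^ (1-γ) ≤ r ^ (1-γ) * (1 + (1-γ) * (-(1/r))) := by
          rw [h2, Real.mul_rpow hr0.le (by rw [h2] at hRn; nlinarith [mul_pos hr0 hr0])]
          exact mul_le_mul_of_nonneg_left hb (Real.rpow_nonneg hr0.le _)
        have h4 : r ^ (1-γ) * (1 + (1-γ) * (-(1/r))) = r ^ (1-γ) - (1-γ) * (r ^ (1-γ) / r) := by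
          ring
        have h5 : r ^ (-γ) = r ^ (1-γ) / r := by
          rw [show -γ = (1-γ)-1 by ring, Real.rpow_sub hr0, Real.rpow_one]
        rw [h4, ← h5] at h3
        linarith
      have mono : (R:ℝ) ^ (1-γ) / (1-γ) + ((R:ℝ)+1) ^ (-γ) ≤ ((R:ℝ)+1) ^ (1-γ) / (1-γ) := by
        rw [div_add' _ _ _ hs0.ne', div_le_div_iff_of_pos_right hs0]
        linarith
      push_cast
      linarith

theorem Z_ge (n k : ℕ) (p : Fin n → ℝ) (hp : IsProbVec n p) (M : ℝ) (hM : ∀ x, p x ≤ M) :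
    1 - (k:ℝ)^2 * M ≤ Z n k p := by
  obtain ⟨hp0, hp1⟩ := hp
  have hprodnn : ∀ v : Fin k → Fin n, 0 ≤ ∏ i, p (v i) := fun v => Finset.prod_nonneg fun i _ => hp0 _
  have hitenn : ∀ (v : Fin k → Fin n) (st : Fin k × Fin k),
      0 ≤ (if v st.1 = v st.2 then ∏ i, p (v i) else 0) := by
    intro v st
    by_cases h : v st.1 = v st.2
    · simpa [h] using hprodnn v
    · simp [h]
  have hM0 : 0 ≤ M := by
    rcases Nat.eq_zero_or_pos n with h | h
    · subst h; simp at hp1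
    · exact le_trans (hp0 ⟨0, h⟩) (hM _)
  have h1 : (∑ v : Fin k → Fin n, ∏ i, p (v i)) = 1 := by
    rw [← Fintype.sum_pow p k, hp1, one_pow]
  have hsplit : (∑ v : Fin k → Fin n, ∏ i, p (v i))
      = Z n k p + ∑ v : Fin k → Fin n, if ¬ Function.Injective v then ∏ i, p (v i) else 0 := by
    rw [Z, ← Finset.sum_add_distrib]
    refine Finset.sum_congr rfl fun v _ => ?_
    by_cases h : Function.Injective v <;> simp [h]
  have hB : (∑ v : Fin k → Fin n, if ¬ Function.Injective v then ∏ i, p (v i) else 0)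
      ≤ (k:ℝ)^2 * M := by
    have step1 : ∀ v : Fin k → Fin n,
        (if ¬ Function.Injective v then ∏ i, p (v i) else 0)
        ≤ ∑ st ∈ (Finset.univ : Finset (Fin k)).offDiag,
            (if v st.1 = v st.2 then ∏ i, p (v i) else 0) := by
      intro v
      by_cases h : Function.Injective v
      · simp only [h, not_true_eq_false, if_false]
        exact Finset.sum_nonneg fun st _ => hitenn v st
      · simp only [h, not_false_eq_true, if_true]
        obtain ⟨a, b, hab, hne⟩ := Function.not_injective_iff.1 h
        have hmem : (a, b) ∈ (Finset.univ : Finset (Fin k)).offDiag := by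
          simp [Finset.mem_offDiag, hne]
        have := Finset.single_le_sum (f := fun st : Fin k × Fin k =>
            (if v st.1 = v st.2 then ∏ i, p (v i) else 0))
          (fun st _ => hitenn v st) hmem
        simpa [hab] using this
    calc (∑ v : Fin k → Fin n, if ¬ Function.Injective v then ∏ i, p (v i) else 0)
        ≤ ∑ v : Fin k → Fin n, ∑ st ∈ (Finset.univ : Finset (Fin k)).offDiag,
            (if v st.1 = v st.2 then ∏ i, p (v i) else 0) :=
          Finset.sum_le_sum fun v _ => step1 v
      _ = ∑ st ∈ (Finset.univ : Finset (Fin k)).offDiag, ∑ v : Fin k → Fin n,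
            (if v st.1 = v st.2 then ∏ i, p (v i) else 0) := Finset.sum_comm
      _ ≤ ∑ _st ∈ (Finset.univ : Finset (Fin k)).offDiag, M := by
          refine Finset.sum_le_sum fun st hst => ?_
          obtain ⟨s, t⟩ := st
          rw [Finset.mem_offDiag] at hst
          have hstne : s ≠ t := hst.2.2
          have hre : ∀ v : Fin k → Fin n,
              (if v s = v t then ∏ i, p (v i) else 0)
              = ∑ x : Fin n, if v s = x ∧ v t = x then ∏ i, p (v i) else 0 := by
            intro v
            by_cases h : v s = v t
            · rw [Finset.sum_eq_single (v s)]
              · simp [h]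
              · intro x _ hx; simp [Ne.symm hx]
              · simp
            · rw [Finset.sum_eq_zero]; · simp [h]
              intro x _
              rw [if_neg]; rintro ⟨h1', h2'⟩; exact h (h1'.trans h2'.symm)
          set f : Fin n → Fin k → Fin n → ℝ := fun x u y =>
            if u = s then (if y = x then p y else 0)
            else if u = t then (if y = x then p y else 0) else p y with hf
          have hfac : ∀ x (v : Fin k → Fin n),
              (if v s = x ∧ v t = x then ∏ i, p (v i) else 0) = ∏ u, f x u (v u) := by
            intro x v
            by_cases h : v s = x ∧ v t = x
            · rw [if_pos h]
              refine Finset.prod_congr rfl fun u _ => ?_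
              by_cases hus : u = s
              · subst hus; simp [hf, h.1]
              · by_cases hut : u = t
                · subst hut; simp [hf, hus, h.2]
                · simp [hf, hus, hut]
            · rw [if_neg h]
              rw [not_and_or] at h
              rcases h with h | h
              · refine (Finset.prod_eq_zero (Finset.mem_univ s) ?_).symm
                simp [hf, h]
              · refine (Finset.prod_eq_zero (Finset.mem_univ t) ?_).symm
                simp [hf, hstne.symm, h]
          calc (∑ v : Fin k → Fin n, if v s = v t then ∏ i, p (v i) else 0)
              = ∑ x : Fin n, ∑ v : Fin k → Fin n, ∏ u, f x u (v u) := by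
                rw [← Finset.sum_comm]
                refine Finset.sum_congr rfl fun v _ => ?_
                rw [hre v]
                exact Finset.sum_congr rfl fun x _ => hfac x v
            _ = ∑ x : Fin n, ∏ u, ∑ y, f x u y := by
                exact Finset.sum_congr rfl fun x _ => (Fintype.prod_sum (f x)).symm
            _ = ∑ x : Fin n, p x * p x := by
                refine Finset.sum_congr rfl fun x _ => ?_
                have hsum : ∀ u, (∑ y, f x u y) = if u = s ∨ u = t then p x else 1 := by
                  intro u
                  by_cases hus : u = s
                  · simp [hf, hus, Finset.sum_ite_eq' Finset.univ x p]
                  · by_cases hut : u = t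
                    · simp [hf, hus, hut, Finset.sum_ite_eq' Finset.univ x p]
                    · simp [hf, hus, hut, hp1]
                simp only [hsum]
                rw [← Finset.prod_filter (fun u => u = s ∨ u = t) (fun _ => p x),
                  Finset.prod_const]
                have hfil : (Finset.univ.filter (fun u => u = s ∨ u = t)) = {s, t} := by
                  ext u; simp [Finset.mem_insert]
                rw [hfil, Finset.card_insert_of_notMem (by simp [hstne]),
                  Finset.card_singleton]
                ring
            _ ≤ ∑ x : Fin n, M * p x :=
                Finset.sum_le_sum fun x _ => mul_le_mul_of_nonneg_right (hM x) (hp0 x)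
            _ = M := by rw [← Finset.mul_sum, hp1, mul_one]
      _ = ((Finset.univ : Finset (Fin k)).offDiag.card : ℝ) * M := by
          rw [Finset.sum_const, nsmul_eq_mul]
      _ ≤ (k:ℝ)^2 * M := by
          refine mul_le_mul_of_nonneg_right ?_ hM0
          rw [Finset.offDiag_card]
          simp only [Finset.card_univ, Fintype.card_fin]
          have : k * k - k ≤ k * k := Nat.sub_le _ _
          calc ((k * k - k : ℕ) : ℝ) ≤ ((k*k : ℕ) : ℝ) := by exact_mod_cast this
            _ = (k:ℝ)^2 := by push_cast; ring
  linarith [hsplit, h1]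

theorem num_le (n k : ℕ) (p : Fin n → ℝ) (hp0 : ∀ i, 0 ≤ p i) (hp1 : ∑ i, p i = 1)
    (i j : Fin n) (hij : i < j) :
    (∑ c : Clause n k, if IsMinPair c i j then
        (if Function.Injective (fun u => (c u).1) then ∏ u, p (c u).1 else 0) else 0)
    ≤ (k:ℝ)^2 * 2^k *
        (p i * p j * (∑ m ∈ Finset.univ.filter (fun m => j ≤ m), p m)^(k-2)) := by
  set H : ℝ := ∑ m ∈ Finset.univ.filter (fun m => j ≤ m), p m with hH
  have hH0 : 0 ≤ H := Finset.sum_nonneg fun m _ => hp0 m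
  set g : Fin k × Fin k → Fin k → (Fin n × Bool) → ℝ := fun st u y =>
    if u = st.1 then (if y.1 = i then p y.1 else 0)
    else if u = st.2 then (if y.1 = j then p y.1 else 0)
    else (if j ≤ y.1 then p y.1 else 0) with hg
  have hgnn : ∀ st u y, 0 ≤ g st u y := by
    intro st u y
    simp only [hg]
    split_ifs <;> first | exact hp0 _ | exact le_rfl
  have step1 : ∀ c : Clause n k,
      (if IsMinPair c i j then
        (if Function.Injective (fun u => (c u).1) then ∏ u, p (c u).1 else 0) else 0)
      ≤ ∑ st ∈ (Finset.univ : Finset (Fin k)).offDiag, ∏ u, g st u (c u) := by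
    intro c
    have hnn : ∀ st ∈ (Finset.univ : Finset (Fin k)).offDiag, 0 ≤ ∏ u, g st u (c u) :=
      fun st _ => Finset.prod_nonneg fun u _ => hgnn st u (c u)
    by_cases hP : IsMinPair c i j
    · by_cases hI : Function.Injective (fun u => (c u).1)
      · rw [if_pos hP, if_pos hI]
        obtain ⟨hi, hj, hlt, hmin, hmin2⟩ := hP
        obtain ⟨s, _, hs⟩ := Finset.mem_image.1 hi
        obtain ⟨t, _, ht⟩ := Finset.mem_image.1 hj
        have hstne : s ≠ t := by
          intro h; rw [h, ht] at hs; exact absurd hs (by exact fun h' => absurd (h' ▸ hlt) (lt_irrefl j))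
        have hmem : (s, t) ∈ (Finset.univ : Finset (Fin k)).offDiag := by
          simp [Finset.mem_offDiag, hstne]
        have heq : ∏ u, g (s, t) u (c u) = ∏ u, p (c u).1 := by
          refine Finset.prod_congr rfl fun u _ => ?_
          by_cases hus : u = s
          · subst hus; simp [hg, hs]
          · by_cases hut : u = t
            · subst hut; simp [hg, hus, ht]
            · have hcu : (c u).1 ∈ varSet c := Finset.mem_image.2 ⟨u, Finset.mem_univ u, rfl⟩
              have hne : (c u).1 ≠ i := by
                intro h
                exact hus (hI (show (c u).1 = (c s).1 from h.trans hs.symm))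
              have : j ≤ (c u).1 := hmin2 _ hcu hne
              simp [hg, hus, hut, this]
        calc (∏ u, p (c u).1) = ∏ u, g (s, t) u (c u) := heq.symm
          _ ≤ ∑ st ∈ (Finset.univ : Finset (Fin k)).offDiag, ∏ u, g st u (c u) :=
            Finset.single_le_sum (f := fun st => ∏ u, g st u (c u)) hnn hmem
      · rw [if_pos hP, if_neg hI]
        exact Finset.sum_nonneg hnn
    · rw [if_neg hP]
      exact Finset.sum_nonneg hnn
  calc (∑ c : Clause n k, if IsMinPair c i j then
        (if Function.Injective (fun u => (c u).1) then ∏ u, p (c u).1 else 0) else 0)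
      ≤ ∑ c : Clause n k, ∑ st ∈ (Finset.univ : Finset (Fin k)).offDiag, ∏ u, g st u (c u) :=
        Finset.sum_le_sum fun c _ => step1 c
    _ = ∑ st ∈ (Finset.univ : Finset (Fin k)).offDiag, ∑ c : Clause n k, ∏ u, g st u (c u) :=
        Finset.sum_comm
    _ = ∑ _st ∈ (Finset.univ : Finset (Fin k)).offDiag, 2^k * (p i * p j * H^(k-2)) := by
        refine Finset.sum_congr rfl fun st hst => ?_
        obtain ⟨s, t⟩ := st
        rw [Finset.mem_offDiag] at hst
        have hstne : s ≠ t := hst.2.2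
        have hdouble : ∀ h : Fin n → ℝ, (∑ y : Fin n × Bool, h y.1) = 2 * ∑ x, h x := by
          intro h
          rw [Fintype.sum_prod_type, Finset.mul_sum]
          refine Finset.sum_congr rfl fun a _ => ?_
          simp [Fintype.sum_bool, two_mul]
        rw [← Fintype.prod_sum (g (s, t))]
        have hcol : ∀ u : Fin k, (∑ y : Fin n × Bool, g (s, t) u y)
            = 2 * (if u = s then p i else if u = t then p j else H) := by
          intro u
          by_cases hus : u = s
          · calc (∑ y : Fin n × Bool, g (s, t) u y)
                = ∑ y : Fin n × Bool, (if y.1 = i then p y.1 else 0) :=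
                  Finset.sum_congr rfl fun y _ => by simp [hg, hus]
              _ = 2 * ∑ x, (if x = i then p x else 0) := hdouble (fun x => if x = i then p x else 0)
              _ = 2 * (if u = s then p i else if u = t then p j else H) := by
                  rw [Finset.sum_ite_eq' Finset.univ i p, if_pos hus]; simp
          · by_cases hut : u = t
            · calc (∑ y : Fin n × Bool, g (s, t) u y)
                  = ∑ y : Fin n × Bool, (if y.1 = j then p y.1 else 0) :=
                    Finset.sum_congr rfl fun y _ => by simp [hg, hus, hut, hstne.symm]
                _ = 2 * ∑ x, (if x = j then p x else 0) := hdouble (fun x => if x = j then p x else 0)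
                _ = 2 * (if u = s then p i else if u = t then p j else H) := by
                    rw [Finset.sum_ite_eq' Finset.univ j p, if_neg hus, if_pos hut]; simp
            · calc (∑ y : Fin n × Bool, g (s, t) u y)
                  = ∑ y : Fin n × Bool, (if j ≤ y.1 then p y.1 else 0) :=
                    Finset.sum_congr rfl fun y _ => by simp [hg, hus, hut]
                _ = 2 * ∑ x, (if j ≤ x then p x else 0) := hdouble (fun x => if j ≤ x then p x else 0)
                _ = 2 * (if u = s then p i else if u = t then p j else H) := by
                    rw [if_neg hus, if_neg hut, hH, Finset.sum_filter]
        simp only [hcol]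
        rw [Finset.prod_mul_distrib, Finset.prod_const]
        simp only [Finset.card_univ, Fintype.card_fin]
        congr 1
        have htmem : t ∈ Finset.univ.erase s := Finset.mem_erase.2 ⟨hstne.symm, Finset.mem_univ t⟩
        have hprod : (∏ u : Fin k, (if u = s then p i else if u = t then p j else H))
            = p i * p j * H^(k-2) := by
          rw [← Finset.mul_prod_erase Finset.univ _ (Finset.mem_univ s),
            ← Finset.mul_prod_erase _ _ htmem, if_pos rfl, if_neg hstne.symm, if_pos rfl]
          have hrest : ∀ u ∈ (Finset.univ.erase s).erase t,
              (if u = s then p i else if u = t then p j else H) = H := by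
            intro u hu
            simp only [Finset.mem_erase] at hu
            rw [if_neg hu.2.1, if_neg hu.1]
          rw [Finset.prod_congr rfl hrest, Finset.prod_const,
            Finset.card_erase_of_mem htmem, Finset.card_erase_of_mem (Finset.mem_univ s),
            Finset.card_univ, Fintype.card_fin]
          have : k - 1 - 1 = k - 2 := by omega
          rw [this]; ring
        exact hprod
    _ = ((Finset.univ : Finset (Fin k)).offDiag.card : ℝ) * (2^k * (p i * p j * H^(k-2))) := by
        rw [Finset.sum_const, nsmul_eq_mul]
    _ ≤ (k:ℝ)^2 * (2^k * (p i * p j * H^(k-2))) := by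
        refine mul_le_mul_of_nonneg_right ?_ (mul_nonneg (by positivity) (mul_nonneg (mul_nonneg (hp0 i) (hp0 j)) (pow_nonneg hH0 _)))
        rw [Finset.offDiag_card]
        simp only [Finset.card_univ, Fintype.card_fin]
        calc ((k * k - k : ℕ) : ℝ) ≤ ((k*k : ℕ) : ℝ) := by exact_mod_cast Nat.sub_le _ _
          _ = (k:ℝ)^2 := by push_cast; ring
    _ = (k:ℝ)^2 * 2^k * (p i * p j * H^(k-2)) := by ring

theorem tail_sum_le (β α₂ : ℝ) (hβ : 2 < β) (hα₂ : 0 < α₂) (n : ℕ) (hn : 0 < n)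
    (w : Fin n → ℝ) (hmono : Monotone w) (hpos : ∀ i, 0 < w i)
    (htail : ∀ x : ℝ, wmin n w ≤ x → x ≤ wmax n w → tailF n w x ≤ α₂ * x ^ (1-β))
    (j : Fin n) :
    ∑ m ∈ Finset.univ.filter (fun m => j ≤ m), w m
      ≤ (α₂ / (1 - 1/(β-1))) * ((n:ℝ) * w j ^ (2-β)) := by
  set γ : ℝ := 1/(β-1) with hγdef
  have hβ1 : (1:ℝ) < β - 1 := by linarith
  have hγ0 : 0 < γ := by rw [hγdef]; positivity
  have hγ1 : γ < 1 := by rw [hγdef, div_lt_one (by linarith)]; linarith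
  have hn0 : (0:ℝ) < n := by exact_mod_cast hn
  have hwmin : ∀ m, wmin n w ≤ w m := by
    intro m; rw [wmin, dif_pos hn]
    exact hmono (by simp [Fin.le_def])
  have hwmax : ∀ m, w m ≤ wmax n w := by
    intro m; rw [wmax, dif_pos hn]
    refine hmono ?_
    show m.val ≤ n - 1
    have := m.isLt
    omega
  have htF : ∀ m : Fin n, ((n - m.val : ℕ):ℝ) ≤ α₂ * (n:ℝ) * (w m) ^ (1-β) := by
    intro m
    have hsub : Finset.Ici m ⊆ Finset.univ.filter (fun x => w m ≤ w x) := by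
      intro x hx
      rw [Finset.mem_Ici] at hx
      exact Finset.mem_filter.2 ⟨Finset.mem_univ x, hmono hx⟩
    have hcard : (n - m.val : ℕ) ≤ (Finset.univ.filter (fun x => w m ≤ w x)).card := by
      calc (n - m.val : ℕ) = (Finset.Ici m).card := by rw [Fin.card_Ici]
        _ ≤ _ := Finset.card_le_card hsub
    have h1 : ((n - m.val : ℕ):ℝ) / n ≤ tailF n w (w m) := by
      rw [tailF]; gcongr
    have h2 : tailF n w (w m) ≤ α₂ * (w m) ^ (1-β) := htail _ (hwmin m) (hwmax m)
    have := (h1.trans h2)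
    calc ((n - m.val : ℕ):ℝ) = (((n - m.val : ℕ):ℝ) / n) * n := by field_simp
      _ ≤ (α₂ * (w m) ^ (1-β)) * n := by gcongr
      _ = α₂ * (n:ℝ) * (w m) ^ (1-β) := by ring
  have hwm_le : ∀ m : Fin n, w m ≤ (α₂ * n) ^ γ * ((n - m.val : ℕ):ℝ) ^ (-γ) := by
    intro m
    have hd0 : (0:ℝ) < ((n - m.val : ℕ):ℝ) := by
      have : 0 < n - m.val := by omega
      exact_mod_cast this
    have h1 : (w m) ^ (β-1) * ((n - m.val : ℕ):ℝ) ≤ α₂ * n := by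
      calc (w m) ^ (β-1) * ((n - m.val : ℕ):ℝ)
          ≤ (w m) ^ (β-1) * (α₂ * (n:ℝ) * (w m) ^ (1-β)) := by
            exact mul_le_mul_of_nonneg_left (htF m) (Real.rpow_nonneg (hpos m).le _)
        _ = α₂ * (n:ℝ) * ((w m) ^ ((β-1) + (1-β))) := by
            rw [Real.rpow_add (hpos m)]; ring
        _ = α₂ * n := by norm_num
    have h2 : (w m) ^ (β-1) ≤ (α₂ * n) / ((n - m.val : ℕ):ℝ) :=
      (le_div_iff₀ hd0).2 h1
    have h3 : ((w m) ^ (β-1)) ^ γ ≤ ((α₂ * n) / ((n - m.val : ℕ):ℝ)) ^ γ :=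
      Real.rpow_le_rpow (Real.rpow_nonneg (hpos m).le _) h2 hγ0.le
    have h4 : ((w m) ^ (β-1)) ^ γ = w m := by
      rw [← Real.rpow_mul (hpos m).le, hγdef, mul_one_div,
        div_self (by linarith : β - 1 ≠ 0), Real.rpow_one]
    have h5 : ((α₂ * n) / ((n - m.val : ℕ):ℝ)) ^ γ
        = (α₂ * n) ^ γ * ((n - m.val : ℕ):ℝ) ^ (-γ) := by
      rw [Real.div_rpow (by positivity) hd0.le, div_eq_mul_inv, ← Real.rpow_neg hd0.le]
    rw [h4, h5] at h3
    exact h3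
  have hreindex : ∑ m ∈ Finset.univ.filter (fun m => j ≤ m), ((n - m.val : ℕ):ℝ) ^ (-γ)
      = ∑ r ∈ Finset.Icc 1 (n - j.val), (r:ℝ) ^ (-γ) := by
    refine Finset.sum_nbij' (fun m => n - m.val) (fun r => ⟨n - max r 1, by omega⟩) ?_ ?_ ?_ ?_ ?_
    · intro m hm
      rw [Finset.mem_filter] at hm
      have := hm.2
      rw [Fin.le_def] at this
      rw [Finset.mem_Icc]
      have := m.isLt
      show 1 ≤ n - m.val ∧ n - m.val ≤ n - j.val
      omega
    · intro r hr
      rw [Finset.mem_Icc] at hr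
      refine Finset.mem_filter.2 ⟨Finset.mem_univ _, ?_⟩
      show j.val ≤ n - max r 1
      have := j.isLt
      omega
    · intro m hm
      have hmlt : m.val < n := m.isLt
      apply Fin.ext
      show n - max (n - m.val) 1 = m.val
      have := m.isLt
      have := j.isLt
      rw [Finset.mem_filter] at hm
      have h2 := hm.2
      rw [Fin.le_def] at h2
      omega
    · intro r hr
      rw [Finset.mem_Icc] at hr
      show n - (n - max r 1) = r
      have := j.isLt
      omega
    · intro m hm; rfl
  have hfinal : ∑ m ∈ Finset.univ.filter (fun m => j ≤ m), w m
      ≤ (α₂ * n) ^ γ * (((n - j.val : ℕ):ℝ) ^ (1-γ) / (1-γ)) := by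
    calc ∑ m ∈ Finset.univ.filter (fun m => j ≤ m), w m
        ≤ ∑ m ∈ Finset.univ.filter (fun m => j ≤ m),
            (α₂ * n) ^ γ * ((n - m.val : ℕ):ℝ) ^ (-γ) :=
          Finset.sum_le_sum fun m _ => hwm_le m
      _ = (α₂ * n) ^ γ * ∑ m ∈ Finset.univ.filter (fun m => j ≤ m),
            ((n - m.val : ℕ):ℝ) ^ (-γ) := by rw [Finset.mul_sum]
      _ = (α₂ * n) ^ γ * ∑ r ∈ Finset.Icc 1 (n - j.val), (r:ℝ) ^ (-γ) := by rw [hreindex]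
      _ ≤ (α₂ * n) ^ γ * (((n - j.val : ℕ):ℝ) ^ (1-γ) / (1-γ)) := by
          refine mul_le_mul_of_nonneg_left ?_ (Real.rpow_nonneg (by positivity) _)
          exact sum_rpow_neg_le γ hγ0 hγ1 (n - j.val)
  have hcnt : ((n - j.val : ℕ):ℝ) ^ (1-γ) ≤ (α₂ * (n:ℝ) * (w j) ^ (1-β)) ^ (1-γ) :=
    Real.rpow_le_rpow (Nat.cast_nonneg _) (htF j) (by linarith)
  have hexpand : (α₂ * (n:ℝ) * (w j) ^ (1-β)) ^ (1-γ)
      = (α₂ * n) ^ (1-γ) * ((w j) ^ (1-β)) ^ (1-γ) := by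
    rw [Real.mul_rpow (by positivity) (Real.rpow_nonneg (hpos j).le _)]
  have hpow2 : ((w j) ^ (1-β)) ^ (1-γ) = (w j) ^ (2-β) := by
    rw [← Real.rpow_mul (hpos j).le]
    congr 1
    rw [hγdef]
    field_simp
    ring
  have hcomb : (α₂ * n) ^ γ * (α₂ * n) ^ (1-γ) = α₂ * n := by
    rw [← Real.rpow_add (by positivity), add_sub_cancel, Real.rpow_one]
  calc ∑ m ∈ Finset.univ.filter (fun m => j ≤ m), w m
      ≤ (α₂ * n) ^ γ * (((n - j.val : ℕ):ℝ) ^ (1-γ) / (1-γ)) := hfinal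
    _ ≤ (α₂ * n) ^ γ * (((α₂ * n) ^ (1-γ) * ((w j) ^ (2-β))) / (1-γ)) := by
        refine mul_le_mul_of_nonneg_left ?_ (Real.rpow_nonneg (by positivity) _)
        rw [div_le_div_iff_of_pos_right (by linarith : (0:ℝ) < 1-γ)]
        rw [← hpow2, ← hexpand]
        exact hcnt
    _ = (α₂ / (1 - 1/(β-1))) * ((n:ℝ) * w j ^ (2-β)) := by
        rw [div_mul_eq_mul_div, ← hγdef]
        rw [show (α₂ * n) ^ γ * ((α₂ * n) ^ (1-γ) * ((w j) ^ (2-β)) / (1-γ))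
          = ((α₂ * n) ^ γ * (α₂ * n) ^ (1-γ)) * ((w j) ^ (2-β)) / (1-γ) by ring, hcomb]
        ring

theorem PrClause_eq (n k : ℕ) (p : Fin n → ℝ) (P : Clause n k → Prop) :
    PrClause n k p P = (∑ c : Clause n k, if P c then
        (if Function.Injective (fun u => (c u).1) then ∏ u, p (c u).1 else 0) else 0)
      / (2^k * Z n k p) := by
  rw [PrClause, Finset.sum_div]
  refine Finset.sum_congr rfl fun c _ => ?_
  by_cases h : P c
  · rw [if_pos h, if_pos h, clauseProb]
  · rw [if_neg h, if_neg h, zero_div]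

theorem PrClause_minpair_zero (n k : ℕ) (p : Fin n → ℝ) (i j : Fin n) (h : ¬ i < j) :
    PrClause n k p (fun c => IsMinPair c i j) = 0 := by
  rw [PrClause]
  refine Finset.sum_eq_zero fun c _ => ?_
  rw [if_neg]
  rintro ⟨-, -, hij, -, -⟩
  exact h hij

theorem core_bound (k n : ℕ) (hk : 2 ≤ k) (β α₂ : ℝ) (hβ : 2 < β) (hα₂ : 0 < α₂)
    (c₁ : ℝ) (hc₁ : 0 < c₁) (w : Fin n → ℝ) (hmono : Monotone w) (hpos : ∀ i, 0 < w i)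
    (hn : 0 < n) (hwmin : c₁ ≤ wmin n w)
    (htail : ∀ x : ℝ, wmin n w ≤ x → x ≤ wmax n w → tailF n w x ≤ α₂ * x ^ (1-β))
    (hZ : 1/2 ≤ Z n k (plp n w)) (i j : Fin n) (hij : i < j) :
    PrClause n k (plp n w) (fun c => IsMinPair c i j) +
        PrClause n k (plp n w) (fun c => IsMinPair c j i) ≤
      (2 * (k:ℝ)^2 * ((α₂ / (1 - 1/(β-1)))/c₁)^(k-2) / c₁^2) * (1 / (n : ℝ) ^ 2) *
        (w i * w j) ^ (1 - 1 / 2 * ((k : ℝ) - 2) * (β - 2)) := by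
  set K : ℝ := α₂ / (1 - 1/(β-1)) with hK
  have hβ1 : (1:ℝ) < β - 1 := by linarith
  have hγ1 : 1/(β-1) < 1 := by rw [div_lt_one (by linarith)]; linarith
  have hKpos : 0 < K := by
    rw [hK]; exact div_pos hα₂ (by linarith)
  have hn0 : (0:ℝ) < n := by exact_mod_cast hn
  have hk2 : (2:ℝ) ≤ (k:ℝ) := by exact_mod_cast hk
  set W : ℝ := ∑ x, w x with hW
  have hWpos : 0 < W := Finset.sum_pos (fun x _ => hpos x) ⟨i, Finset.mem_univ i⟩
  have hWge : c₁ * n ≤ W := by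
    calc c₁ * n = (Finset.univ : Finset (Fin n)).card • c₁ := by
          simp [Finset.card_univ, nsmul_eq_mul]; ring
      _ ≤ W := Finset.card_nsmul_le_sum _ _ _ (fun x _ => by
          refine hwmin.trans ?_
          rw [wmin, dif_pos hn]
          exact hmono (by simp [Fin.le_def]))
  set p : Fin n → ℝ := plp n w with hp
  have hp0 : ∀ x, 0 ≤ p x := fun x => div_nonneg (hpos x).le hWpos.le
  have hp1 : ∑ x, p x = 1 := by
    rw [hp]; simp only [plp]; rw [← Finset.sum_div, ← hW, div_self hWpos.ne']
  have hZpos : 0 < Z n k p := lt_of_lt_of_le (by norm_num) hZ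
  -- the second term vanishes
  have hzero : PrClause n k p (fun c => IsMinPair c j i) = 0 :=
    PrClause_minpair_zero n k p j i (by intro h; exact absurd (h.trans hij) (lt_irrefl j))
  rw [hzero, add_zero, PrClause_eq]
  set H : ℝ := ∑ m ∈ Finset.univ.filter (fun m => j ≤ m), p m with hH
  have hH0 : 0 ≤ H := Finset.sum_nonneg fun m _ => hp0 m
  have hSnn : (0:ℝ) ≤ ∑ c : Clause n k, if IsMinPair c i j then
      (if Function.Injective (fun u => (c u).1) then ∏ u, p (c u).1 else 0) else 0 := by
    refine Finset.sum_nonneg fun c _ => ?_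
    by_cases h : IsMinPair c i j
    · rw [if_pos h]
      by_cases h2 : Function.Injective (fun u => (c u).1)
      · rw [if_pos h2]; exact Finset.prod_nonneg fun u _ => hp0 _
      · rw [if_neg h2]
    · rw [if_neg h]
  have hXnn : (0:ℝ) ≤ (k:ℝ)^2 * 2^k * (p i * p j * H^(k-2)) := by
    have := hp0 i; have := hp0 j
    positivity
  have step1 : (∑ c : Clause n k, if IsMinPair c i j then
      (if Function.Injective (fun u => (c u).1) then ∏ u, p (c u).1 else 0) else 0)
      / (2^k * Z n k p)
      ≤ ((k:ℝ)^2 * 2^k * (p i * p j * H^(k-2))) / (2^k * (1/2)) := by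
    calc (∑ c : Clause n k, if IsMinPair c i j then
        (if Function.Injective (fun u => (c u).1) then ∏ u, p (c u).1 else 0) else 0)
        / (2^k * Z n k p)
        ≤ ((k:ℝ)^2 * 2^k * (p i * p j * H^(k-2))) / (2^k * Z n k p) := by
          gcongr
          exact num_le n k p hp0 hp1 i j hij
      _ ≤ ((k:ℝ)^2 * 2^k * (p i * p j * H^(k-2))) / (2^k * (1/2)) := by
          gcongr
  have hsimp : ((k:ℝ)^2 * 2^k * (p i * p j * H^(k-2))) / (2^k * (1/2))
      = 2 * (k:ℝ)^2 * (p i * p j * H^(k-2)) := by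
    have h2k : (0:ℝ) < 2^k := by positivity
    field_simp
  -- bounds on p i, p j, H
  have hpib : ∀ x : Fin n, p x ≤ w x / (c₁ * n) := by
    intro x
    rw [hp]; simp only [plp, ← hW]
    exact div_le_div_of_nonneg_left (hpos x).le (by positivity) hWge
  have hHb : H ≤ (K/c₁) * w j ^ (2-β) := by
    have hts := tail_sum_le β α₂ hβ hα₂ n hn w hmono hpos htail j
    have : H = (∑ m ∈ Finset.univ.filter (fun m => j ≤ m), w m) / W := by
      rw [hH, Finset.sum_div]
      refine Finset.sum_congr rfl fun m _ => ?_
      rw [hp]; simp [plp, hW]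
    rw [this]
    calc (∑ m ∈ Finset.univ.filter (fun m => j ≤ m), w m) / W
        ≤ (K * ((n:ℝ) * w j ^ (2-β))) / (c₁ * n) := by
          refine div_le_div₀ (mul_nonneg hKpos.le (mul_nonneg hn0.le (Real.rpow_nonneg (hpos j).le _))) hts (by positivity) hWge
      _ = (K/c₁) * w j ^ (2-β) := by
          field_simp
  have hfin1 : 2 * (k:ℝ)^2 * (p i * p j * H^(k-2))
      ≤ 2 * (k:ℝ)^2 * ((w i / (c₁*n)) * (w j / (c₁*n)) * ((K/c₁) * w j ^ (2-β))^(k-2)) := by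
    gcongr <;> first
      | exact hp0 i | exact hp0 j | exact hpib i | exact hpib j
      | exact pow_le_pow_left₀ hH0 hHb _
      | exact mul_nonneg (div_nonneg (hpos i).le (by positivity)) (div_nonneg (hpos j).le (by positivity))
      | exact div_nonneg (hpos i).le (by positivity)
      | exact div_nonneg (hpos j).le (by positivity)
      | positivity
  -- rpow computations
  have hpow : ((K/c₁) * w j ^ (2-β))^(k-2)
      = (K/c₁)^(k-2) * w j ^ ((2-β) * ((k:ℝ)-2)) := by
    rw [mul_pow]
    congr 1
    rw [← Real.rpow_natCast (w j ^ (2-β)) (k-2), ← Real.rpow_mul (hpos j).le]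
    congr 1
    rw [Nat.cast_sub hk]
    norm_num
  have harith : 2 * (k:ℝ)^2 * ((w i / (c₁*n)) * (w j / (c₁*n)) *
        ((K/c₁)^(k-2) * w j ^ ((2-β) * ((k:ℝ)-2))))
      = (2 * (k:ℝ)^2 * ((K/c₁))^(k-2) / c₁^2) * (1 / (n : ℝ) ^ 2) *
        (w i * w j * w j ^ ((2-β) * ((k:ℝ)-2))) := by
    field_simp
  have hexp : w i * w j * w j ^ ((2-β) * ((k:ℝ)-2))
      ≤ (w i * w j) ^ (1 - 1 / 2 * ((k : ℝ) - 2) * (β - 2)) := by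
    have hwij : 0 < w i * w j := mul_pos (hpos i) (hpos j)
    have e1 : (w i * w j) ^ (1 - 1 / 2 * ((k : ℝ) - 2) * (β - 2))
        = (w i * w j) * (w i * w j) ^ (-(1 / 2 * ((k : ℝ) - 2) * (β - 2))) := by
      rw [show (1 - 1 / 2 * ((k : ℝ) - 2) * (β - 2))
        = 1 + (-(1 / 2 * ((k : ℝ) - 2) * (β - 2))) by ring,
        Real.rpow_add hwij, Real.rpow_one]
    have e2 : w j ^ ((2-β) * ((k:ℝ)-2))
        ≤ (w i * w j) ^ (-(1 / 2 * ((k : ℝ) - 2) * (β - 2))) := by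
      have h1 : w j ^ ((2-β) * ((k:ℝ)-2))
          = (w j * w j) ^ (-(1 / 2 * ((k : ℝ) - 2) * (β - 2))) := by
        rw [Real.mul_rpow (hpos j).le (hpos j).le, ← Real.rpow_add (hpos j)]
        congr 1
        ring
      rw [h1]
      refine Real.rpow_le_rpow_of_nonpos hwij ?_ ?_
      · exact mul_le_mul_of_nonneg_right (hmono hij.le) (hpos j).le
      · have : (0:ℝ) ≤ 1 / 2 * ((k : ℝ) - 2) * (β - 2) := by
          have : (0:ℝ) ≤ (k:ℝ) - 2 := by linarith
          nlinarith
        linarith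
    calc w i * w j * w j ^ ((2-β) * ((k:ℝ)-2))
        ≤ w i * w j * (w i * w j) ^ (-(1 / 2 * ((k : ℝ) - 2) * (β - 2))) := by
          exact mul_le_mul_of_nonneg_left e2 hwij.le
      _ = (w i * w j) ^ (1 - 1 / 2 * ((k : ℝ) - 2) * (β - 2)) := e1.symm
  calc (∑ c : Clause n k, if IsMinPair c i j then
      (if Function.Injective (fun u => (c u).1) then ∏ u, p (c u).1 else 0) else 0)
      / (2^k * Z n k p)
      ≤ ((k:ℝ)^2 * 2^k * (p i * p j * H^(k-2))) / (2^k * (1/2)) := step1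
    _ = 2 * (k:ℝ)^2 * (p i * p j * H^(k-2)) := hsimp
    _ ≤ 2 * (k:ℝ)^2 * ((w i / (c₁*n)) * (w j / (c₁*n)) * ((K/c₁) * w j ^ (2-β))^(k-2)) := hfin1
    _ = (2 * (k:ℝ)^2 * ((K/c₁))^(k-2) / c₁^2) * (1 / (n : ℝ) ^ 2) *
        (w i * w j * w j ^ ((2-β) * ((k:ℝ)-2))) := by rw [hpow, harith]
    _ ≤ (2 * (k:ℝ)^2 * ((K/c₁))^(k-2) / c₁^2) * (1 / (n : ℝ) ^ 2) *
        ((w i * w j) ^ (1 - 1 / 2 * ((k : ℝ) - 2) * (β - 2))) := by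
        refine mul_le_mul_of_nonneg_left hexp ?_
        positivity


/-- For a single random clause from the power-law model, the two
literals `ℓ₁, ℓ₂` of smallest and second-smallest weight satisfy
`Pr[|ℓ₁| = i, |ℓ₂| = j] + Pr[|ℓ₁| = j, |ℓ₂| = i] ≤ O(n⁻²(wᵢwⱼ)^{1-(k-2)(β-2)/2})`,
uniformly in `i`, `j` and `n`. -/

theorem shrunk_clause_distribution (k : ℕ) (hk : 2 ≤ k) (β α₁ α₂ : ℝ) (hβ : 2 < β)
    (w : (n : ℕ) → Fin n → ℝ) (hw : IsPowerLawFamily β α₁ α₂ w) :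
    ∃ C : ℝ, 0 < C ∧ ∀ᶠ n : ℕ in atTop, ∀ i j : Fin n,
      PrClause n k (plp n (w n)) (fun c => IsMinPair c i j) +
        PrClause n k (plp n (w n)) (fun c => IsMinPair c j i) ≤
      C * (1 / (n : ℝ) ^ 2) *
        (w n i * w n j) ^ (1 - 1 / 2 * ((k : ℝ) - 2) * (β - 2)) := by
  obtain ⟨c₁, c₂, hc₁, hE1⟩ := hw.wmin_theta
  obtain ⟨d₁, d₂, hd₁, hE2⟩ := hw.wmax_theta
  have hα₂ : (0:ℝ) < α₂ := lt_of_lt_of_le hw.α₁_pos hw.α₁_le_α₂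
  have hβ1 : (1:ℝ) < β - 1 := by linarith
  have hKpos : (0:ℝ) < α₂ / (1 - 1/(β-1)) := by
    apply div_pos hα₂
    rw [sub_pos, div_lt_one (by linarith)]
    linarith
  have hk0 : (0:ℝ) < (k:ℝ) := by exact_mod_cast (by omega : 0 < k)
  have hCpos : (0:ℝ) < 2 * (k:ℝ)^2 * ((α₂ / (1 - 1/(β-1)))/c₁)^(k-2) / c₁^2 :=
    div_pos (mul_pos (mul_pos (by norm_num) (pow_pos hk0 2))
      (pow_pos (div_pos hKpos hc₁) _)) (pow_pos hc₁ 2)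
  refine ⟨2 * (k:ℝ)^2 * ((α₂ / (1 - 1/(β-1)))/c₁)^(k-2) / c₁^2, hCpos, ?_⟩
  have hE4 : ∀ᶠ n : ℕ in atTop,
      (k:ℝ)^2 * (d₂ * (n : ℝ) ^ (1 / (β - 1)) / (c₁ * n)) ≤ 1/2 := by
    have hpos : (0:ℝ) < 1 - 1/(β-1) := by
      rw [sub_pos, div_lt_one (by linarith)]; linarith
    have h1 : Tendsto (fun x : ℝ => ((k:ℝ)^2 * d₂ / c₁) * x ^ (-(1 - 1/(β-1))))
        atTop (nhds 0) := by
      simpa using (tendsto_rpow_neg_atTop hpos).const_mul ((k:ℝ)^2 * d₂ / c₁)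
    have h2 : Tendsto (fun n : ℕ => ((k:ℝ)^2 * d₂ / c₁) * (n:ℝ) ^ (-(1 - 1/(β-1))))
        atTop (nhds 0) := h1.comp tendsto_natCast_atTop_atTop
    have h3 : ∀ᶠ n : ℕ in atTop,
        ((k:ℝ)^2 * d₂ / c₁) * (n:ℝ) ^ (-(1 - 1/(β-1))) ≤ 1/2 :=
      h2.eventually_le_const (by norm_num)
    filter_upwards [h3, eventually_gt_atTop 0] with n h hn
    have hn0 : (0:ℝ) < n := by exact_mod_cast hn
    have heq : (k:ℝ)^2 * (d₂ * (n : ℝ) ^ (1 / (β - 1)) / (c₁ * n))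
        = ((k:ℝ)^2 * d₂ / c₁) * (n:ℝ) ^ (-(1 - 1/(β-1))) := by
      rw [show -(1 - 1/(β-1)) = 1/(β-1) - 1 by ring, Real.rpow_sub hn0, Real.rpow_one]
      field_simp
    rw [heq]
    exact h
  filter_upwards [hE1, hE2, eventually_gt_atTop 0, hE4] with n h1 h2 h3 h4
  intro i j
  have hn0 : (0:ℝ) < n := by exact_mod_cast h3
  have hWpos : (0:ℝ) < ∑ x, w n x :=
    Finset.sum_pos (fun x _ => hw.pos n x) ⟨⟨0, h3⟩, Finset.mem_univ _⟩
  have hWge : c₁ * n ≤ ∑ x, w n x := by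
    calc c₁ * n = (Finset.univ : Finset (Fin n)).card • c₁ := by
          simp [Finset.card_univ, nsmul_eq_mul]; ring
      _ ≤ ∑ x, w n x := Finset.card_nsmul_le_sum _ _ _ (fun x _ => by
          refine h1.1.trans ?_
          rw [wmin, dif_pos h3]
          exact hw.mono n (by simp [Fin.le_def]))
  have hp0 : ∀ x, 0 ≤ plp n (w n) x := fun x => div_nonneg (hw.pos n x).le hWpos.le
  have hp1 : ∑ x, plp n (w n) x = 1 := by
    simp only [plp]
    rw [← Finset.sum_div, div_self hWpos.ne']
  have hminmax : wmin n (w n) ≤ wmax n (w n) := by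
    rw [wmin, wmax, dif_pos h3, dif_pos h3]
    exact hw.mono n (by show (0:ℕ) ≤ n-1; omega)
  have hMb : ∀ x, plp n (w n) x ≤ d₂ * (n:ℝ)^(1/(β-1)) / (c₁ * n) := by
    intro x
    have hx1 : w n x ≤ wmax n (w n) := by
      rw [wmax, dif_pos h3]
      refine hw.mono n ?_
      show x.val ≤ n - 1
      have := x.isLt
      omega
    have hub : (0:ℝ) ≤ d₂ * (n:ℝ)^(1/(β-1)) :=
      le_trans hc₁.le (le_trans h1.1 (hminmax.trans h2.2))
    simp only [plp]
    exact div_le_div₀ hub (hx1.trans h2.2) (by positivity) hWge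
  have hZ : 1/2 ≤ Z n k (plp n (w n)) := by
    have hzge := Z_ge n k (plp n (w n)) ⟨hp0, hp1⟩ _ hMb
    linarith [h4]
  rcases lt_trichotomy i j with hlt | heq | hgt
  · exact core_bound k n hk β α₂ hβ hα₂ c₁ hc₁ (w n) (hw.mono n) (hw.pos n) h3 h1.1
      (fun x hx hx' => (hw.tail n h3 x hx hx').2) hZ i j hlt
  · subst heq
    rw [PrClause_minpair_zero n k (plp n (w n)) i i (lt_irrefl i), add_zero]
    refine mul_nonneg (mul_nonneg hCpos.le (by positivity))
      (Real.rpow_nonneg (mul_pos (hw.pos n i) (hw.pos n i)).le _)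
  · have hcore := core_bound k n hk β α₂ hβ hα₂ c₁ hc₁ (w n) (hw.mono n) (hw.pos n) h3 h1.1
      (fun x hx hx' => (hw.tail n h3 x hx hx').2) hZ j i hgt
    rw [add_comm, show w n i * w n j = w n j * w n i from mul_comm _ _]
    exact hcore

end PLSAT
end

section
/- Let w_1 ≤ … ≤ w_n be general power-law weights with exponent β, let δ be a real number, and suppose β = δ + 1 + ε for some ε > 0. Then there exists a constant c > 0 (independent of n and l) such that for all integers 1 ≤ l ≤ n: ∑_{S ⊆ [n], |S| = l} ∏_{i ∈ S} w_i^δ ≤ n^l · c^l / l!. -/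
open Finset Filter
open scoped BigOperators Classical

namespace PLSAT

lemma two_term_binomial (A a : ℝ) (hA : 0 ≤ A) (ha : 0 ≤ a) :
    ∀ l : ℕ, A ^ (l+1) + ((l:ℝ)+1) * a * A ^ l ≤ (A + a) ^ (l+1) := by
  intro l
  induction l with
  | zero => simp
  | succ l ih =>
    have h2 : 0 ≤ A + a := by linarith
    have h3 : (A + a) * (A ^ (l+1) + ((l:ℝ)+1) * a * A ^ l) ≤ (A + a) * (A + a)^(l+1) :=
      mul_le_mul_of_nonneg_left ih h2
    have hp : 0 ≤ A ^ l := pow_nonneg hA l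
    have hp1 : 0 ≤ A ^ (l+1) := pow_nonneg hA (l+1)
    push_cast
    have hexp : (A + a) * (A ^ (l+1) + ((l:ℝ)+1) * a * A ^ l)
        = A ^ (l+1+1) + ((l:ℝ)+1+1) * a * A ^ (l+1) + ((l:ℝ)+1) * (a*a) * A ^ l := by
      ring
    have hnn : 0 ≤ ((l:ℝ)+1) * (a*a) * A ^ l :=
      mul_nonneg (mul_nonneg (by positivity) (mul_nonneg ha ha)) hp
    have hpow : (A+a) ^ (l+1+1) = (A+a) * (A+a)^(l+1) := by ring
    linarith [h3]

lemma esymm_factorial_le {ι : Type*} (a : ι → ℝ) (ha : ∀ i, 0 ≤ a i) :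
    ∀ (s : Finset ι) (l : ℕ),
      (∑ S ∈ s.powersetCard l, ∏ i ∈ S, a i) * (l.factorial : ℝ) ≤ (∑ i ∈ s, a i) ^ l := by
  intro s
  induction s using Finset.induction_on with
  | empty =>
    intro l
    cases l with
    | zero => simp
    | succ l =>
      rw [Finset.powersetCard_eq_empty.2 (by simp)]
      simp
  | @insert x s hx ih =>
    intro l
    cases l with
    | zero => simp
    | succ l =>
      have hdisj : Disjoint (s.powersetCard (l+1)) ((s.powersetCard l).image (insert x)) := by
        rw [Finset.disjoint_right]
        intro S hS hS'
        obtain ⟨T, hT, rfl⟩ := Finset.mem_image.1 hS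
        have h1 : insert x T ⊆ s := (Finset.mem_powersetCard.1 hS').1
        exact hx (h1 (Finset.mem_insert_self x T))
      have hinj : ∀ T ∈ s.powersetCard l, ∀ U ∈ s.powersetCard l,
          insert x T = insert x U → T = U := by
        intro T hT U hU h
        have hxT : x ∉ T := fun hxT => hx ((Finset.mem_powersetCard.1 hT).1 hxT)
        have hxU : x ∉ U := fun hxU => hx ((Finset.mem_powersetCard.1 hU).1 hxU)
        rw [← Finset.erase_insert hxT, ← Finset.erase_insert hxU, h]
      rw [Finset.powersetCard_succ_insert hx, Finset.sum_union hdisj,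
        Finset.sum_image hinj, Finset.sum_insert hx]
      have hprod : ∀ T ∈ s.powersetCard l, ∏ i ∈ insert x T, a i = a x * ∏ i ∈ T, a i := by
        intro T hT
        exact Finset.prod_insert (fun hxT => hx ((Finset.mem_powersetCard.1 hT).1 hxT))
      rw [Finset.sum_congr rfl hprod, ← Finset.mul_sum]
      set A := ∑ i ∈ s, a i with hA
      set e1 := ∑ S ∈ s.powersetCard (l+1), ∏ i ∈ S, a i with he1
      set e0 := ∑ S ∈ s.powersetCard l, ∏ i ∈ S, a i with he0
      have h1 := ih (l+1)
      have h0 := ih l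
      have hkey := two_term_binomial A (a x) (Finset.sum_nonneg fun i _ => ha i) (ha x) l
      have hfact : (((l+1).factorial : ℕ) : ℝ) = ((l:ℝ)+1) * (l.factorial : ℝ) := by
        rw [Nat.factorial_succ]; push_cast; ring
      have h0' : ((l:ℝ)+1) * a x * (e0 * l.factorial) ≤ ((l:ℝ)+1) * a x * A ^ l :=
        mul_le_mul_of_nonneg_left h0 (mul_nonneg (by positivity) (ha x))
      have heq : (e1 + a x * e0) * (((l+1).factorial : ℕ) : ℝ)
          = e1 * (((l+1).factorial : ℕ) : ℝ) + ((l:ℝ)+1) * a x * (e0 * l.factorial) := by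
        rw [hfact]; ring
      rw [heq, add_comm (a x) A]
      calc e1 * (((l+1).factorial : ℕ) : ℝ) + ((l:ℝ)+1) * a x * (e0 * l.factorial)
          ≤ A ^ (l+1) + ((l:ℝ)+1) * a x * A ^ l := add_le_add h1 h0'
        _ ≤ (A + a x) ^ (l+1) := hkey

lemma exists_dyadic {x : ℝ} (hx : 1 ≤ x) : ∃ k : ℕ, (2:ℝ)^k ≤ x ∧ x < 2^(k+1) := by
  refine ⟨Nat.log 2 ⌊x⌋₊, ?_, ?_⟩
  · have h1 : 1 ≤ ⌊x⌋₊ := Nat.le_floor (by exact_mod_cast hx)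
    have h2 := Nat.pow_log_le_self 2 (by omega : ⌊x⌋₊ ≠ 0)
    calc (2:ℝ) ^ Nat.log 2 ⌊x⌋₊ ≤ (⌊x⌋₊ : ℝ) := by exact_mod_cast h2
      _ ≤ x := Nat.floor_le (by linarith)
  · have h2 := Nat.lt_pow_succ_log_self (by norm_num : 1 < 2) ⌊x⌋₊
    calc x < ⌊x⌋₊ + 1 := Nat.lt_floor_add_one x
      _ ≤ 2 ^ (Nat.log 2 ⌊x⌋₊ + 1) := by exact_mod_cast Nat.succ_le_of_lt h2


/-- For power-law weights with exponent `β = δ + 1 + ε` (`ε > 0`),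
there is a constant `c > 0` with `∑_{S ⊆ [n], |S| = l} ∏_{i ∈ S} wᵢ^δ ≤ nˡ cˡ / l!`
for all `1 ≤ l ≤ n`. -/
theorem subset_product_sum_bound (β α₁ α₂ δ ε : ℝ) (hε : 0 < ε)
    (hβ : β = δ + 1 + ε)
    (w : (n : ℕ) → Fin n → ℝ) (hw : IsPowerLawFamily β α₁ α₂ w) :
    ∃ c : ℝ, 0 < c ∧ ∀ᶠ n : ℕ in atTop, ∀ l : ℕ, 1 ≤ l → l ≤ n →
      (∑ S ∈ Finset.powersetCard l (Finset.univ : Finset (Fin n)),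
          ∏ i ∈ S, (w n i) ^ δ)
        ≤ (n : ℝ) ^ l * c ^ l / (Nat.factorial l : ℝ) := by
  subst hβ
  obtain ⟨c₁, c₂, hc₁, hmin⟩ := hw.wmin_theta
  have hα₂ : 0 < α₂ := lt_of_lt_of_le hw.α₁_pos hw.α₁_le_α₂
  set q : ℝ := (2:ℝ) ^ (-ε) with hqdef
  have hq0 : 0 < q := Real.rpow_pos_of_pos two_pos _
  have hq1 : q < 1 := Real.rpow_lt_one_of_one_lt_of_neg one_lt_two (neg_lt_zero.2 hε)
  set K : ℝ := max (α₂ * (2:ℝ)^(δ:ℝ) * c₁ ^ (-ε) / (1 - q)) (c₁ ^ (δ:ℝ)) with hKdef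
  have hK0 : 0 < K := lt_max_of_lt_right (Real.rpow_pos_of_pos hc₁ δ)
  refine ⟨K, hK0, ?_⟩
  have hmain : ∀ᶠ n : ℕ in atTop, (∑ i, (w n i) ^ δ) ≤ K * n := by
    filter_upwards [hmin, eventually_gt_atTop 0] with n hmn hn0
    set m := wmin n (w n) with hm
    have hm1 : c₁ ≤ m := hmn.1
    have hm0 : 0 < m := lt_of_lt_of_le hc₁ hm1
    have hmw : ∀ i, m ≤ w n i := by
      intro i
      rw [hm, wmin, dif_pos hn0]
      exact hw.mono n (by simp [Fin.le_def])
    set M := wmax n (w n) with hM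
    have hwM : ∀ i, w n i ≤ M := by
      intro i
      rw [hM, wmax, dif_pos hn0]
      exact hw.mono n (by rw [Fin.le_def]; exact Nat.le_sub_one_of_lt i.isLt)
    have hn' : (0:ℝ) < n := by exact_mod_cast hn0
    have hcount : ∀ x : ℝ, m ≤ x →
        ((Finset.univ.filter fun i => x ≤ w n i).card : ℝ) ≤ α₂ * x ^ (1-(δ+1+ε)) * n := by
      intro x hx
      have hx0 : 0 < x := lt_of_lt_of_le hm0 hx
      by_cases hxM : x ≤ M
      · have ht := (hw.tail n hn0 x hx hxM).2
        rw [tailF] at ht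
        rw [div_le_iff₀ hn'] at ht
        exact ht
      · have he : (Finset.univ.filter fun i => x ≤ w n i) = ∅ := by
          rw [Finset.filter_eq_empty_iff]
          intro i _
          exact not_le.2 (lt_of_le_of_lt (hwM i) (not_le.1 hxM))
        rw [he]
        simp only [Finset.card_empty, Nat.cast_zero]
        exact mul_nonneg (mul_nonneg hα₂.le (Real.rpow_nonneg hx0.le _)) hn'.le
    rcases le_or_gt δ 0 with hδ | hδ
    · have hb : ∀ i, (w n i) ^ δ ≤ c₁ ^ δ := fun i =>
        Real.rpow_le_rpow_of_nonpos hc₁ (le_trans hm1 (hmw i)) hδ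
      calc (∑ i, (w n i)^δ) ≤ ∑ _i : Fin n, c₁ ^ δ := Finset.sum_le_sum fun i _ => hb i
        _ = n * c₁ ^ δ := by rw [Finset.sum_const, Finset.card_univ, Fintype.card_fin,
              nsmul_eq_mul]
        _ ≤ n * K := by
            apply mul_le_mul_of_nonneg_left (le_max_right _ _) hn'.le
        _ = K * n := mul_comm _ _
    · obtain ⟨J, hJ⟩ := pow_unbounded_of_one_lt (M / m) (one_lt_two (α := ℝ))
      have key : ∀ i : Fin n, ∃ k, k < J ∧ (2:ℝ)^k * m ≤ w n i ∧ w n i < 2^(k+1) * m := by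
        intro i
        obtain ⟨k, hk1, hk2⟩ := exists_dyadic (x := w n i / m) ((one_le_div hm0).mpr (hmw i))
        refine ⟨k, ?_, (le_div_iff₀ hm0).1 hk1, (div_lt_iff₀ hm0).1 hk2⟩
        have ha : (2:ℝ)^k * m ≤ w n i := (le_div_iff₀ hm0).1 hk1
        have hb : M < 2^J * m := by rw [div_lt_iff₀ hm0] at hJ; exact hJ
        have hc : (2:ℝ)^k * m < 2^J * m := lt_of_le_of_lt (ha.trans (hwM i)) hb
        exact (pow_lt_pow_iff_right₀ one_lt_two).1 (lt_of_mul_lt_mul_right hc hm0.le)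
      have hterm : ∀ i : Fin n, (w n i) ^ δ ≤
          ∑ j ∈ Finset.range J,
            (if (2:ℝ)^j * m ≤ w n i ∧ w n i < 2^(j+1)*m then ((2:ℝ)^(j+1) * m)^δ else 0) := by
        intro i
        obtain ⟨k, hkJ, hk1, hk2⟩ := key i
        have h1 : (w n i) ^ δ ≤
            (if (2:ℝ)^k * m ≤ w n i ∧ w n i < 2^(k+1)*m then ((2:ℝ)^(k+1) * m)^δ else 0) := by
          rw [if_pos ⟨hk1, hk2⟩]
          exact Real.rpow_le_rpow (hw.pos n i).le hk2.le hδ.le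
        refine h1.trans (Finset.single_le_sum
          (f := fun j => if (2:ℝ)^j * m ≤ w n i ∧ w n i < 2^(j+1)*m
            then ((2:ℝ)^(j+1) * m)^δ else 0)
          (fun j _ => ?_) (Finset.mem_range.2 hkJ))
        split_ifs
        · exact Real.rpow_nonneg (by positivity) δ
        · exact le_refl 0
      have step1 : (∑ i, (w n i)^δ) ≤ ∑ j ∈ Finset.range J, ∑ i : Fin n,
          (if (2:ℝ)^j * m ≤ w n i ∧ w n i < 2^(j+1)*m then ((2:ℝ)^(j+1) * m)^δ else 0) := by
        rw [Finset.sum_comm]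
        exact Finset.sum_le_sum fun i _ => hterm i
      have conv : ∀ (j:ℕ) (s:ℝ), ((2:ℝ)^j * m)^s = (2:ℝ)^((j:ℝ)*s) * m^s := by
        intro j s
        rw [Real.mul_rpow (by positivity) hm0.le, ← Real.rpow_natCast (2:ℝ) j,
          ← Real.rpow_mul (by norm_num)]
      have step2 : ∀ j ∈ Finset.range J, (∑ i : Fin n,
          (if (2:ℝ)^j * m ≤ w n i ∧ w n i < 2^(j+1)*m then ((2:ℝ)^(j+1) * m)^δ else 0))
          ≤ (α₂ * (2:ℝ)^(δ:ℝ) * m^(-ε) * n) * q^j := by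
        intro j _
        have htj : (0:ℝ) ≤ ((2:ℝ)^(j+1) * m)^δ := Real.rpow_nonneg (by positivity) δ
        have h1 : (∑ i : Fin n,
            (if (2:ℝ)^j * m ≤ w n i ∧ w n i < 2^(j+1)*m then ((2:ℝ)^(j+1) * m)^δ else 0))
            = ((Finset.univ.filter fun i => (2:ℝ)^j * m ≤ w n i ∧ w n i < 2^(j+1)*m).card : ℝ)
              * ((2:ℝ)^(j+1) * m)^δ := by
          rw [← Finset.sum_filter, Finset.sum_const, nsmul_eq_mul]
        rw [h1]
        have h2 : ((Finset.univ.filter fun i => (2:ℝ)^j * m ≤ w n i ∧ w n i < 2^(j+1)*m).card : ℝ)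
            ≤ α₂ * ((2:ℝ)^j * m) ^ (1-(δ+1+ε)) * n := by
          refine le_trans ?_ (hcount ((2:ℝ)^j * m)
            (le_mul_of_one_le_left hm0.le (one_le_pow₀ (by norm_num : (1:ℝ) ≤ 2))))
          exact Nat.cast_le.2 (Finset.card_le_card (by
            intro i hi
            simp only [Finset.mem_filter] at hi ⊢
            exact ⟨hi.1, hi.2.1⟩))
        have h3 : (α₂ * ((2:ℝ)^j * m) ^ (1-(δ+1+ε)) * n) * ((2:ℝ)^(j+1) * m)^δ
            = (α₂ * (2:ℝ)^(δ:ℝ) * m^(-ε) * n) * q^j := by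
          have e1 := conv j (1-(δ+1+ε))
          have e2 : ((2:ℝ)^(j+1) * m) ^ δ = (2:ℝ)^(((j:ℝ)+1)*δ) * m^δ := by
            have := conv (j+1) δ
            push_cast at this
            exact this
          have e3 : q^j = (2:ℝ)^(-ε*(j:ℝ)) := by
            rw [← Real.rpow_natCast q j, hqdef, ← Real.rpow_mul (by norm_num : (0:ℝ) ≤ 2)]
          have e4 : (2:ℝ)^((j:ℝ)*(1-(δ+1+ε))) * (2:ℝ)^(((j:ℝ)+1)*δ)
              = (2:ℝ)^(δ:ℝ) * (2:ℝ)^(-ε*(j:ℝ)) := by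
            rw [← Real.rpow_add two_pos, ← Real.rpow_add two_pos]
            congr 1
            ring
          have e5 : m^(1-(δ+1+ε)) * m^δ = m^(-ε) := by
            rw [← Real.rpow_add hm0]
            congr 1
            ring
          rw [e1, e2, e3]
          calc (α₂ * ((2:ℝ)^((j:ℝ)*(1-(δ+1+ε))) * m^(1-(δ+1+ε))) * n)
                * ((2:ℝ)^(((j:ℝ)+1)*δ) * m^δ)
              = (α₂*n) * ((2:ℝ)^((j:ℝ)*(1-(δ+1+ε))) * (2:ℝ)^(((j:ℝ)+1)*δ))
                * (m^(1-(δ+1+ε)) * m^δ) := by ring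
            _ = (α₂*n) * ((2:ℝ)^(δ:ℝ) * (2:ℝ)^(-ε*(j:ℝ))) * m^(-ε) := by rw [e4, e5]
            _ = (α₂ * (2:ℝ)^(δ:ℝ) * m^(-ε) * n) * (2:ℝ)^(-ε*(j:ℝ)) := by ring
        rw [← h3]
        exact mul_le_mul_of_nonneg_right h2 htj
      have hKnn : (0:ℝ) ≤ α₂ * (2:ℝ)^(δ:ℝ) * m^(-ε) * n :=
        mul_nonneg (mul_nonneg (mul_nonneg hα₂.le (Real.rpow_nonneg (by norm_num) _))
          (Real.rpow_nonneg hm0.le _)) hn'.le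
      have hgeom : (∑ j ∈ Finset.range J, q^j) ≤ 1/(1-q) := by
        rw [le_div_iff₀ (by linarith : (0:ℝ) < 1 - q)]
        nlinarith [geom_sum_mul q J, pow_nonneg hq0.le J]
      have step3 : (∑ i, (w n i)^δ) ≤ (α₂ * (2:ℝ)^(δ:ℝ) * m^(-ε) * n) * (1/(1-q)) := by
        calc (∑ i, (w n i)^δ)
            ≤ ∑ j ∈ Finset.range J, ∑ i : Fin n,
              (if (2:ℝ)^j * m ≤ w n i ∧ w n i < 2^(j+1)*m then ((2:ℝ)^(j+1) * m)^δ else 0) := step1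
          _ ≤ ∑ j ∈ Finset.range J, (α₂ * (2:ℝ)^(δ:ℝ) * m^(-ε) * n) * q^j :=
              Finset.sum_le_sum step2
          _ = (α₂ * (2:ℝ)^(δ:ℝ) * m^(-ε) * n) * (∑ j ∈ Finset.range J, q^j) := by
              rw [Finset.mul_sum]
          _ ≤ (α₂ * (2:ℝ)^(δ:ℝ) * m^(-ε) * n) * (1/(1-q)) :=
              mul_le_mul_of_nonneg_left hgeom hKnn
      have hmc : m^(-ε) ≤ c₁^(-ε) :=
        Real.rpow_le_rpow_of_nonpos hc₁ hm1 (by linarith)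
      calc (∑ i, (w n i)^δ)
          ≤ (α₂ * (2:ℝ)^(δ:ℝ) * m^(-ε) * n) * (1/(1-q)) := step3
        _ ≤ (α₂ * (2:ℝ)^(δ:ℝ) * c₁^(-ε) * n) * (1/(1-q)) := by
            have h1q : (0:ℝ) < 1 - q := by linarith
            have h2δ : (0:ℝ) ≤ α₂ * (2:ℝ)^(δ:ℝ) :=
              mul_nonneg hα₂.le (Real.rpow_nonneg (by norm_num) _)
            have hmm : α₂ * (2:ℝ)^(δ:ℝ) * m^(-ε) * n ≤ α₂ * (2:ℝ)^(δ:ℝ) * c₁^(-ε) * n :=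
              mul_le_mul_of_nonneg_right (mul_le_mul_of_nonneg_left hmc h2δ) hn'.le
            exact mul_le_mul_of_nonneg_right hmm (by positivity)
        _ = (α₂ * (2:ℝ)^(δ:ℝ) * c₁^(-ε) / (1-q)) * n := by ring
        _ ≤ K * n := mul_le_mul_of_nonneg_right (le_max_left _ _) hn'.le
  filter_upwards [hmain] with n hS
  intro l hl1 hln
  have hnn : ∀ i : Fin n, 0 ≤ (w n i) ^ δ := fun i => (Real.rpow_pos_of_pos (hw.pos n i) δ).le
  have h := esymm_factorial_le (fun i => (w n i)^δ) hnn Finset.univ l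
  have hSnn : 0 ≤ ∑ i, (w n i)^δ := Finset.sum_nonneg fun i _ => hnn i
  have h2 : (∑ i, (w n i)^δ) ^ l ≤ (K * n) ^ l := pow_le_pow_left₀ hSnn hS l
  have hfp : (0:ℝ) < (l.factorial : ℝ) := by exact_mod_cast l.factorial_pos
  calc (∑ S ∈ Finset.powersetCard l (Finset.univ : Finset (Fin n)), ∏ i ∈ S, (w n i) ^ δ)
      ≤ (∑ i, (w n i)^δ) ^ l / (l.factorial : ℝ) := by
        rw [le_div_iff₀ hfp]; exact h
    _ ≤ (K * n) ^ l / (l.factorial : ℝ) := (div_le_div_iff_of_pos_right hfp).2 h2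
    _ = (n:ℝ) ^ l * K ^ l / (l.factorial : ℝ) := by rw [mul_pow]; ring

end PLSAT
end

section
/- Let w_1 ≤ … ≤ w_n be general power-law weights with exponent β > 2 and induced probabilities p_i := w_i/∑_j w_j, and let j ≥ 1 be a fixed real number. Then ∑_{i=1}^n p_i^j = Θ(n^{−j(β−2)/(β−1)}) if j > β−1, and ∑_{i=1}^n p_i^j = Θ(n^{1−j}) if 1 ≤ j < β−1. In particular, ‖p‖₂² = ∑_{i=1}^n p_i² = o(1) for every β > 2. -/
open Finset Filter
open scoped BigOperators Classical

namespace PLSAT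

-- ## Auxiliary lemmas

lemma step_ineq (γ : ℝ) (h0 : 0 < γ) (h1 : γ < 1) (k : ℕ) :
    (1 - γ) * ((k : ℝ) + 1) ^ (-γ) ≤ ((k : ℝ) + 1) ^ (1 - γ) - (k : ℝ) ^ (1 - γ) := by
  have hk1 : (0:ℝ) < (k:ℝ) + 1 := by positivity
  have hs : (-1:ℝ) ≤ -(1/((k:ℝ)+1)) := by
    rw [neg_le_neg_iff, div_le_one hk1]; linarith [Nat.cast_nonneg (α := ℝ) k]
  have hbern := rpow_one_add_le_one_add_mul_self (s := -(1/((k:ℝ)+1)))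
    hs (p := 1 - γ) (by linarith) (by linarith)
  have h2 : (1:ℝ) + -(1/((k:ℝ)+1)) = (k:ℝ)/((k:ℝ)+1) := by field_simp; ring
  rw [h2] at hbern
  have h3 : (k:ℝ) ^ (1-γ) = ((k:ℝ)+1) ^ (1-γ) * ((k:ℝ)/((k:ℝ)+1)) ^ (1-γ) := by
    rw [← Real.mul_rpow (le_of_lt hk1) (by positivity)]
    congr 1; field_simp
  have h4 : ((k:ℝ)+1) ^ (1-γ) / ((k:ℝ)+1) = ((k:ℝ)+1) ^ (-γ) := by
    have hne : ((k:ℝ)+1) ^ γ ≠ 0 := ne_of_gt (Real.rpow_pos_of_pos hk1 _)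
    rw [Real.rpow_sub hk1, Real.rpow_neg hk1.le, Real.rpow_one]
    field_simp
  have hpow : (0:ℝ) ≤ ((k:ℝ)+1) ^ (1-γ) := Real.rpow_nonneg (le_of_lt hk1) _
  calc (1 - γ) * ((k : ℝ) + 1) ^ (-γ)
      = ((k:ℝ)+1) ^ (1-γ) - ((k:ℝ)+1) ^ (1-γ) * (1 + (1-γ) * -(1/((k:ℝ)+1))) := by
        rw [← h4]; field_simp; ring
    _ ≤ ((k:ℝ)+1) ^ (1-γ) - ((k:ℝ)+1) ^ (1-γ) * ((k:ℝ)/((k:ℝ)+1)) ^ (1-γ) := by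
        have := mul_le_mul_of_nonneg_left hbern hpow
        linarith
    _ = ((k:ℝ)+1) ^ (1-γ) - (k:ℝ) ^ (1-γ) := by rw [← h3]

lemma sum_rpow_neg_le_of_lt_one (γ : ℝ) (h0 : 0 < γ) (h1 : γ < 1) (n : ℕ) :
    ∑ k ∈ Finset.range n, ((k : ℝ) + 1) ^ (-γ) ≤ (n : ℝ) ^ (1 - γ) / (1 - γ) := by
  rw [le_div_iff₀ (by linarith : (0:ℝ) < 1 - γ)]
  have := Finset.sum_range_sub (f := fun k : ℕ => (k : ℝ) ^ (1 - γ)) n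
  calc (∑ k ∈ Finset.range n, ((k : ℝ) + 1) ^ (-γ)) * (1 - γ)
      = ∑ k ∈ Finset.range n, (1 - γ) * ((k : ℝ) + 1) ^ (-γ) := by
        rw [Finset.sum_mul]; exact Finset.sum_congr rfl (fun _ _ => mul_comm _ _)
    _ ≤ ∑ k ∈ Finset.range n, (((k:ℝ)+1) ^ (1-γ) - (k:ℝ) ^ (1-γ)) :=
        Finset.sum_le_sum (fun k _ => step_ineq γ h0 h1 k)
    _ = (n : ℝ) ^ (1-γ) - (0:ℝ) ^ (1-γ) := by
        push_cast at this ⊢; exact this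
    _ = (n : ℝ) ^ (1-γ) := by rw [Real.zero_rpow (by linarith)]; ring

lemma summable_shift (γ : ℝ) (h1 : 1 < γ) :
    Summable (fun k : ℕ => ((k : ℝ) + 1) ^ (-γ)) := by
  have : Summable (fun k : ℕ => (k : ℝ) ^ (-γ)) :=
    Real.summable_nat_rpow.2 (by linarith)
  have h := (summable_nat_add_iff 1).2 this
  convert h using 2 with k
  exacts [rfl, by simp]

lemma sum_rpow_neg_le_tsum (γ : ℝ) (h1 : 1 < γ) (n : ℕ) :
    ∑ k ∈ Finset.range n, ((k : ℝ) + 1) ^ (-γ) ≤ ∑' k : ℕ, ((k : ℝ) + 1) ^ (-γ) :=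
  Summable.sum_le_tsum _ (fun i _ => Real.rpow_nonneg (by positivity) _) (summable_shift γ h1)

lemma sum_w_rpow_le (β α₂ : ℝ) (hβ : 2 < β) (hα₂ : 0 ≤ α₂) {n : ℕ} (hn : 0 < n)
    (w : Fin n → ℝ) (hmono : Monotone w) (hpos : ∀ i, 0 < w i)
    (htail : ∀ x, wmin n w ≤ x → x ≤ wmax n w → tailF n w x ≤ α₂ * x ^ (1 - β))
    (j : ℝ) (hj : 0 < j) :
    ∑ i, (w i) ^ j ≤
      (α₂ * n) ^ (j/(β-1)) * ∑ k ∈ Finset.range n, ((k:ℝ)+1) ^ (-(j/(β-1))) := by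
  have hβ1 : (0:ℝ) < β - 1 := by linarith
  have hγpos : 0 < j/(β-1) := div_pos hj hβ1
  have npos : (0:ℝ) < n := Nat.cast_pos.2 hn
  have key : ∀ i : Fin n, w i ^ j ≤ (α₂ * n) ^ (j/(β-1)) * ((n - i.1 : ℕ) : ℝ) ^ (-(j/(β-1))) := by
    intro i
    have hwi := hpos i
    have h1 : wmin n w ≤ w i := by
      rw [wmin, dif_pos hn]; exact hmono (Fin.mk_le_of_le_val (Nat.zero_le _))
    have h2 : w i ≤ wmax n w := by
      rw [wmax, dif_pos hn]
      exact hmono (Fin.le_def.mpr (Nat.le_pred_of_lt i.isLt))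
    have htf := htail (w i) h1 h2
    have hcard : (n - i.1 : ℕ) ≤ (Finset.univ.filter fun k => w i ≤ w k).card := by
      have hsub : Finset.Ici i ⊆ Finset.univ.filter fun k => w i ≤ w k := by
        intro k hk
        simp only [Finset.mem_filter, Finset.mem_univ, true_and]
        exact hmono (Finset.mem_Ici.1 hk)
      calc (n - i.1 : ℕ) = (Finset.Ici i).card := (Fin.card_Ici i).symm
        _ ≤ _ := Finset.card_le_card hsub
    have hA : (0:ℝ) < w i ^ (β-1) := Real.rpow_pos_of_pos hwi _
    have hmpos : (0:ℝ) < ((n - i.1 : ℕ) : ℝ) := by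
      have : 0 < n - i.1 := Nat.sub_pos_of_lt i.isLt
      exact_mod_cast this
    have hineq : ((n - i.1 : ℕ) : ℝ) / n ≤ α₂ * (w i ^ (β-1))⁻¹ := by
      have hle : ((n - i.1 : ℕ) : ℝ)/n ≤ tailF n w (w i) := by
        unfold tailF
        gcongr

      have hrw : (w i) ^ (1-β) = (w i ^ (β-1))⁻¹ := by
        rw [show (1-β) = -(β-1) by ring, Real.rpow_neg hwi.le]
      calc ((n - i.1 : ℕ) : ℝ)/n ≤ tailF n w (w i) := hle
        _ ≤ α₂ * (w i) ^ (1-β) := htf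
        _ = α₂ * (w i ^ (β-1))⁻¹ := by rw [hrw]
    have hAle : w i ^ (β-1) ≤ α₂ * n / ((n - i.1 : ℕ) : ℝ) := by
      rw [le_div_iff₀ hmpos]
      rw [div_le_iff₀ npos] at hineq
      have h5 := mul_le_mul_of_nonneg_right hineq hA.le
      calc w i ^ (β-1) * ((n - i.1 : ℕ) : ℝ) = ((n - i.1 : ℕ) : ℝ) * (w i ^ (β-1)) := by ring
        _ ≤ α₂ * (w i ^ (β-1))⁻¹ * n * (w i ^ (β-1)) := h5
        _ = α₂ * n := by field_simp
    have hstep : w i ^ j = (w i ^ (β-1)) ^ (j/(β-1)) := by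
      rw [← Real.rpow_mul hwi.le]
      congr 1
      field_simp
    rw [hstep]
    calc (w i ^ (β-1)) ^ (j/(β-1)) ≤ (α₂ * n / ((n - i.1 : ℕ) : ℝ)) ^ (j/(β-1)) :=
        Real.rpow_le_rpow hA.le hAle hγpos.le
      _ = (α₂*n) ^ (j/(β-1)) * ((n - i.1 : ℕ) : ℝ) ^ (-(j/(β-1))) := by
        rw [Real.div_rpow (mul_nonneg hα₂ npos.le) hmpos.le, Real.rpow_neg hmpos.le, div_eq_mul_inv]
  calc ∑ i, w i ^ j ≤ ∑ i : Fin n, (α₂*n) ^ (j/(β-1)) * ((n - i.1 : ℕ) : ℝ) ^ (-(j/(β-1))) :=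
      Finset.sum_le_sum (fun i _ => key i)
    _ = (α₂*n) ^ (j/(β-1)) * ∑ i : Fin n, ((n - i.1 : ℕ) : ℝ) ^ (-(j/(β-1))) := by
      rw [← Finset.mul_sum]
    _ = _ := by
      congr 1
      rw [Fin.sum_univ_eq_sum_range (fun i => ((n - i : ℕ) : ℝ) ^ (-(j/(β-1)))) n]
      rw [← Finset.sum_range_reflect]
      apply Finset.sum_congr rfl
      intro k hk
      have hk' : k < n := Finset.mem_range.1 hk
      have hnk : n - (n-1-k) = k+1 := by omega
      rw [hnk]
      push_cast
      ring_nf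

/-- Moments of power-law induced probabilities: for fixed real
`j ≥ 1`, `∑ᵢ pᵢʲ = Θ(n^{-j(β-2)/(β-1)})` if `j > β-1`, and `Θ(n^{1-j})` if
`j < β-1`; in particular `‖p‖₂² = o(1)` for every `β > 2`. -/
theorem power_law_moments (β α₁ α₂ : ℝ) (hβ : 2 < β)
    (w : (n : ℕ) → Fin n → ℝ) (hw : IsPowerLawFamily β α₁ α₂ w)
    (j : ℝ) (hj : 1 ≤ j) :
    (β - 1 < j → ∃ C₁ C₂ : ℝ, 0 < C₁ ∧ ∀ᶠ n : ℕ in atTop,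
        C₁ * (n : ℝ) ^ (-(j * (β - 2) / (β - 1))) ≤ (∑ i, (plp n (w n) i) ^ j) ∧
        (∑ i, (plp n (w n) i) ^ j) ≤ C₂ * (n : ℝ) ^ (-(j * (β - 2) / (β - 1)))) ∧
    (j < β - 1 → ∃ C₁ C₂ : ℝ, 0 < C₁ ∧ ∀ᶠ n : ℕ in atTop,
        C₁ * (n : ℝ) ^ (1 - j) ≤ (∑ i, (plp n (w n) i) ^ j) ∧
        (∑ i, (plp n (w n) i) ^ j) ≤ C₂ * (n : ℝ) ^ (1 - j)) ∧
    Tendsto (fun n : ℕ => ∑ i, (plp n (w n) i) ^ (2 : ℕ)) atTop (nhds 0) := by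
  have hα₂ : 0 < α₂ := lt_of_lt_of_le hw.α₁_pos hw.α₁_le_α₂
  have hβ1 : (0:ℝ) < β - 1 := by linarith
  obtain ⟨c₁, c₂, hc₁, hminEv⟩ := hw.wmin_theta
  obtain ⟨d₁, d₂, hd₁, hmaxEv⟩ := hw.wmax_theta
  have hj0 : (0:ℝ) < j := by linarith
  have hγ₀pos : (0:ℝ) < 1/(β-1) := by positivity
  have hγ₀lt : 1/(β-1) < 1 := by rw [div_lt_one hβ1]; linarith
  have hCwpos : (0:ℝ) < α₂ ^ ((1:ℝ)/(β-1)) / (1 - 1/(β-1)) := by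
    exact div_pos (Real.rpow_pos_of_pos hα₂ _) (by linarith)
  set Cw := α₂ ^ ((1:ℝ)/(β-1)) / (1 - 1/(β-1)) with hCwdef
  -- upper bound on total weight
  have hWub : ∀ n : ℕ, 0 < n → ∑ i, w n i ≤ Cw * n := by
    intro n hn
    have npos : (0:ℝ) < n := Nat.cast_pos.2 hn
    have h := sum_w_rpow_le β α₂ hβ hα₂.le hn (w n) (hw.mono n) (hw.pos n)
      (fun x h1 h2 => (hw.tail n hn x h1 h2).2) 1 one_pos
    have h2 := sum_rpow_neg_le_of_lt_one (1/(β-1)) hγ₀pos hγ₀lt n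
    have h3 : (0:ℝ) ≤ (α₂ * n) ^ ((1:ℝ)/(β-1)) := Real.rpow_nonneg (by positivity) _
    have h6 : (n:ℝ)^((1:ℝ)/(β-1)) * (n:ℝ)^(1 - 1/(β-1)) = n := by
      rw [← Real.rpow_add npos]; norm_num
    calc ∑ i, w n i = ∑ i, (w n i)^(1:ℝ) := by
          exact Finset.sum_congr rfl (fun i _ => (Real.rpow_one _).symm)
      _ ≤ (α₂*n)^((1:ℝ)/(β-1)) * ∑ k ∈ Finset.range n, ((k:ℝ)+1)^(-((1:ℝ)/(β-1))) := h
      _ ≤ (α₂*n)^((1:ℝ)/(β-1)) * ((n:ℝ)^(1-1/(β-1))/(1-1/(β-1))) :=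
          mul_le_mul_of_nonneg_left h2 h3
      _ = Cw * n := by
          rw [Real.mul_rpow hα₂.le npos.le, hCwdef]
          calc α₂^((1:ℝ)/(β-1)) * (n:ℝ)^((1:ℝ)/(β-1)) * ((n:ℝ)^(1-1/(β-1))/(1-1/(β-1)))
              = α₂^((1:ℝ)/(β-1))/(1-1/(β-1)) * ((n:ℝ)^((1:ℝ)/(β-1)) * (n:ℝ)^(1-1/(β-1))) := by
                ring
            _ = α₂^((1:ℝ)/(β-1))/(1-1/(β-1)) * n := by rw [h6]
  have hWpos : ∀ n : ℕ, 0 < n → 0 < ∑ i, w n i := fun n hn =>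
    Finset.sum_pos (fun i _ => hw.pos n i) ⟨⟨0, hn⟩, Finset.mem_univ _⟩
  have hplpnn : ∀ n : ℕ, 0 < n → ∀ i, 0 ≤ plp n (w n) i := by
    intro n hn i; exact div_nonneg (hw.pos n i).le (hWpos n hn).le
  have hwge : ∀ n : ℕ, 0 < n → c₁ ≤ wmin n (w n) → ∀ i, c₁ ≤ w n i := by
    intro n hn hmin i
    refine le_trans hmin ?_
    rw [wmin, dif_pos hn]
    exact hw.mono n (Fin.mk_le_of_le_val (Nat.zero_le _))
  have hWlb : ∀ n : ℕ, 0 < n → c₁ ≤ wmin n (w n) → c₁ * n ≤ ∑ i, w n i := by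
    intro n hn hmin
    have h := Finset.sum_le_sum (fun i (_ : i ∈ Finset.univ) => hwge n hn hmin i)
    rw [Finset.sum_const, Finset.card_univ, Fintype.card_fin, nsmul_eq_mul] at h
    linarith
  have hwmaxle : ∀ n : ℕ, (hn : 0 < n) → ∀ i : Fin n, w n i ≤ wmax n (w n) := by
    intro n hn i
    rw [wmax, dif_pos hn]
    exact hw.mono n (Fin.le_def.mpr (Nat.le_pred_of_lt i.isLt))
  refine ⟨?_, ?_, ?_⟩
  · -- case β - 1 < j
    intro hjβ
    have hγ1 : 1 < j/(β-1) := (one_lt_div hβ1).mpr hjβ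
    refine ⟨(d₁/Cw)^j, α₂^(j/(β-1)) * (∑' k : ℕ, ((k:ℝ)+1)^(-(j/(β-1)))) / c₁^j,
      Real.rpow_pos_of_pos (div_pos hd₁ hCwpos) _, ?_⟩
    filter_upwards [hminEv, hmaxEv, eventually_gt_atTop 0] with n hmin hmax hn
    have npos : (0:ℝ) < n := Nat.cast_pos.2 hn
    have Wpos := hWpos n hn
    have hub := hWub n hn
    have hlb := hWlb n hn hmin.1
    constructor
    · -- lower bound via the largest weight
      set i0 : Fin n := ⟨n-1, Nat.sub_lt hn one_pos⟩ with hi0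
      have hwl : d₁ * (n:ℝ)^((1:ℝ)/(β-1)) ≤ w n i0 := by
        have h := hmax.1; rwa [wmax, dif_pos hn] at h
      have hple : (d₁ * (n:ℝ)^((1:ℝ)/(β-1)))/(Cw*n) ≤ plp n (w n) i0 :=
        div_le_div₀ (hw.pos n i0).le hwl Wpos hub
      have h1 : ((d₁ * (n:ℝ)^((1:ℝ)/(β-1)))/(Cw*n))^j ≤ (plp n (w n) i0)^j :=
        Real.rpow_le_rpow (by positivity) hple hj0.le
      have h2 : (plp n (w n) i0)^j ≤ ∑ i, (plp n (w n) i)^j :=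
        Finset.single_le_sum (fun i _ => Real.rpow_nonneg (hplpnn n hn i) j)
          (Finset.mem_univ i0)
      have hid : (d₁ * (n:ℝ)^((1:ℝ)/(β-1)))/(Cw*n) = (d₁/Cw) * (n:ℝ)^((1:ℝ)/(β-1) - 1) := by
        rw [Real.rpow_sub npos, Real.rpow_one]
        field_simp
      have hid2 : ((d₁/Cw) * (n:ℝ)^((1:ℝ)/(β-1) - 1))^j
          = (d₁/Cw)^j * (n:ℝ)^(-(j*(β-2)/(β-1))) := by
        rw [Real.mul_rpow (by positivity) (Real.rpow_nonneg npos.le _),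
          ← Real.rpow_mul npos.le]
        congr 1
        field_simp
        ring
      calc (d₁/Cw)^j * (n:ℝ)^(-(j*(β-2)/(β-1)))
          = ((d₁*(n:ℝ)^((1:ℝ)/(β-1)))/(Cw*n))^j := by rw [hid, hid2]
        _ ≤ _ := le_trans h1 h2
    · -- upper bound
      have hsum := sum_w_rpow_le β α₂ hβ hα₂.le hn (w n) (hw.mono n) (hw.pos n)
        (fun x ha hb => (hw.tail n hn x ha hb).2) j hj0
      have htsum := sum_rpow_neg_le_tsum (j/(β-1)) hγ1 n
      have hnum : ∑ i, (w n i)^j ≤ (α₂*n)^(j/(β-1)) * ∑' k:ℕ, ((k:ℝ)+1)^(-(j/(β-1))) :=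
        le_trans hsum (mul_le_mul_of_nonneg_left htsum (Real.rpow_nonneg (by positivity) _))
      have hplp : ∑ i, (plp n (w n) i)^j = (∑ i, (w n i)^j) / (∑ i, w n i)^j := by
        rw [Finset.sum_div]
        refine Finset.sum_congr rfl (fun i _ => ?_)
        unfold plp
        rw [Real.div_rpow (hw.pos n i).le Wpos.le]
      have hden : (c₁*n)^j ≤ (∑ i, w n i)^j :=
        Real.rpow_le_rpow (by positivity) hlb hj0.le
      have hdenpos : (0:ℝ) < (c₁*n)^j := Real.rpow_pos_of_pos (by positivity) _
      have hnumnn : (0:ℝ) ≤ (α₂*n)^(j/(β-1)) * ∑' k:ℕ, ((k:ℝ)+1)^(-(j/(β-1))) := by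
        refine mul_nonneg (Real.rpow_nonneg (by positivity) _) (tsum_nonneg fun k => ?_)
        positivity
      have hfin : ((α₂*n)^(j/(β-1)) * ∑' k:ℕ, ((k:ℝ)+1)^(-(j/(β-1)))) / (c₁*n)^j
          = α₂^(j/(β-1)) * (∑' k:ℕ, ((k:ℝ)+1)^(-(j/(β-1)))) / c₁^j
            * (n:ℝ)^(-(j*(β-2)/(β-1))) := by
        rw [Real.mul_rpow hα₂.le npos.le, Real.mul_rpow hc₁.le npos.le]
        rw [show -(j*(β-2)/(β-1)) = j/(β-1) - j by field_simp; ring, Real.rpow_sub npos]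
        have hnj : (n:ℝ)^j ≠ 0 := ne_of_gt (Real.rpow_pos_of_pos npos _)
        have hcj : c₁^j ≠ 0 := ne_of_gt (Real.rpow_pos_of_pos hc₁ _)
        field_simp
      rw [hplp]
      calc (∑ i, (w n i)^j) / (∑ i, w n i)^j
          ≤ ((α₂*n)^(j/(β-1)) * ∑' k:ℕ, ((k:ℝ)+1)^(-(j/(β-1)))) / (c₁*n)^j :=
            div_le_div₀ hnumnn hnum hdenpos hden
        _ = _ := hfin
  · -- case j < β - 1
    intro hjβ
    have hγlt : j/(β-1) < 1 := (div_lt_one hβ1).mpr hjβ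
    have hγpos : 0 < j/(β-1) := div_pos hj0 hβ1
    refine ⟨(c₁/Cw)^j, α₂^(j/(β-1)) / ((1 - j/(β-1)) * c₁^j),
      Real.rpow_pos_of_pos (div_pos hc₁ hCwpos) _, ?_⟩
    filter_upwards [hminEv, hmaxEv, eventually_gt_atTop 0] with n hmin hmax hn
    have npos : (0:ℝ) < n := Nat.cast_pos.2 hn
    have Wpos := hWpos n hn
    have hub := hWub n hn
    have hlb := hWlb n hn hmin.1
    constructor
    · -- lower bound: every probability is at least c₁/(Cw n)
      have hple : ∀ i : Fin n, (c₁/(Cw*n)) ≤ plp n (w n) i := fun i =>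
        div_le_div₀ (hw.pos n i).le (hwge n hn hmin.1 i) Wpos hub
      have hsumlb : (n:ℝ) * (c₁/(Cw*n))^j ≤ ∑ i, (plp n (w n) i)^j := by
        have h := Finset.sum_le_sum (fun (i : Fin n) (_ : i ∈ Finset.univ) =>
          Real.rpow_le_rpow (by positivity : (0:ℝ) ≤ c₁/(Cw*n)) (hple i) hj0.le)
        rw [Finset.sum_const, Finset.card_univ, Fintype.card_fin, nsmul_eq_mul] at h
        exact h
      have hid : (n:ℝ) * (c₁/(Cw*n))^j = (c₁/Cw)^j * (n:ℝ)^(1-j) := by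
        have h1 : c₁/(Cw*n) = (c₁/Cw) * (n:ℝ)^(-(1:ℝ)) := by
          rw [Real.rpow_neg_one]; field_simp
        rw [h1, Real.mul_rpow (by positivity) (Real.rpow_nonneg npos.le _),
          ← Real.rpow_mul npos.le,
          show (1:ℝ)-j = 1 + (-1*j) by ring, Real.rpow_add npos, Real.rpow_one]
        ring
      rw [← hid]
      exact hsumlb
    · -- upper bound
      have hsum := sum_w_rpow_le β α₂ hβ hα₂.le hn (w n) (hw.mono n) (hw.pos n)
        (fun x ha hb => (hw.tail n hn x ha hb).2) j hj0
      have hsr := sum_rpow_neg_le_of_lt_one (j/(β-1)) hγpos hγlt n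
      have hnum : ∑ i, (w n i)^j
          ≤ (α₂*n)^(j/(β-1)) * ((n:ℝ)^(1-j/(β-1))/(1-j/(β-1))) :=
        le_trans hsum (mul_le_mul_of_nonneg_left hsr (Real.rpow_nonneg (by positivity) _))
      have hplp : ∑ i, (plp n (w n) i)^j = (∑ i, (w n i)^j) / (∑ i, w n i)^j := by
        rw [Finset.sum_div]
        refine Finset.sum_congr rfl (fun i _ => ?_)
        unfold plp
        rw [Real.div_rpow (hw.pos n i).le Wpos.le]
      have hden : (c₁*n)^j ≤ (∑ i, w n i)^j :=
        Real.rpow_le_rpow (by positivity) hlb hj0.le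
      have hdenpos : (0:ℝ) < (c₁*n)^j := Real.rpow_pos_of_pos (by positivity) _
      have hnumnn : (0:ℝ) ≤ (α₂*n)^(j/(β-1)) * ((n:ℝ)^(1-j/(β-1))/(1-j/(β-1))) := by
        refine mul_nonneg (Real.rpow_nonneg (by positivity) _) ?_
        refine div_nonneg (Real.rpow_nonneg npos.le _) (by linarith)
      have e1 : (n:ℝ)^(j/(β-1)) * (n:ℝ)^(1-j/(β-1)) = (n:ℝ) := by
        rw [← Real.rpow_add npos]; norm_num
      have e2 : (n:ℝ)^((1:ℝ)-j) = (n:ℝ)/(n:ℝ)^j := by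
        rw [Real.rpow_sub npos, Real.rpow_one]
      have hfin : ((α₂*n)^(j/(β-1)) * ((n:ℝ)^(1-j/(β-1))/(1-j/(β-1)))) / (c₁*n)^j
          = α₂^(j/(β-1)) / ((1 - j/(β-1)) * c₁^j) * (n:ℝ)^(1-j) := by
        rw [Real.mul_rpow hα₂.le npos.le, Real.mul_rpow hc₁.le npos.le]
        have hnj : (n:ℝ)^j ≠ 0 := ne_of_gt (Real.rpow_pos_of_pos npos _)
        have hcj : c₁^j ≠ 0 := ne_of_gt (Real.rpow_pos_of_pos hc₁ _)
        have hγne : (1 - j/(β-1)) ≠ 0 := by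
          intro h; rw [sub_eq_zero] at h; exact (ne_of_lt hγlt) h.symm
        calc (α₂^(j/(β-1)) * (n:ℝ)^(j/(β-1)) * ((n:ℝ)^(1-j/(β-1))/(1-j/(β-1))))
              / (c₁^j * (n:ℝ)^j)
            = (α₂^(j/(β-1)) * ((n:ℝ)^(j/(β-1)) * (n:ℝ)^(1-j/(β-1)))/(1-j/(β-1)))
              / (c₁^j * (n:ℝ)^j) := by ring
          _ = (α₂^(j/(β-1)) * (n:ℝ)/(1-j/(β-1))) / (c₁^j * (n:ℝ)^j) := by rw [e1]
          _ = α₂^(j/(β-1)) / ((1 - j/(β-1)) * c₁^j) * ((n:ℝ)/(n:ℝ)^j) := by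
              field_simp
          _ = α₂^(j/(β-1)) / ((1 - j/(β-1)) * c₁^j) * (n:ℝ)^((1:ℝ)-j) := by rw [← e2]
      rw [hplp]
      calc (∑ i, (w n i)^j) / (∑ i, w n i)^j
          ≤ ((α₂*n)^(j/(β-1)) * ((n:ℝ)^(1-j/(β-1))/(1-j/(β-1)))) / (c₁*n)^j :=
            div_le_div₀ hnumnn hnum hdenpos hden
        _ = _ := hfin
  · -- square sum tends to zero
    have hg : Tendsto (fun n : ℕ => (d₂/c₁) * (n:ℝ)^((1:ℝ)/(β-1) - 1)) atTop (nhds 0) := by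
      have h1 : Tendsto (fun x : ℝ => x^(-(1 - 1/(β-1)))) atTop (nhds 0) :=
        tendsto_rpow_neg_atTop (by linarith)
      have h2 : Tendsto (fun n : ℕ => ((n:ℝ))^((1:ℝ)/(β-1) - 1)) atTop (nhds 0) := by
        rw [show (1:ℝ)/(β-1) - 1 = -(1 - 1/(β-1)) by ring]
        exact h1.comp tendsto_natCast_atTop_atTop
      have := h2.const_mul (d₂/c₁)
      simpa using this
    refine tendsto_of_tendsto_of_tendsto_of_le_of_le' tendsto_const_nhds hg ?_ ?_
    · filter_upwards [eventually_gt_atTop 0] with n hn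
      exact Finset.sum_nonneg (fun i _ => by positivity)
    · filter_upwards [hminEv, hmaxEv, eventually_gt_atTop 0] with n hmin hmax hn
      have npos : (0:ℝ) < n := Nat.cast_pos.2 hn
      have Wpos := hWpos n hn
      have hlb := hWlb n hn hmin.1
      have hwmaxpos : 0 < wmax n (w n) := by
        rw [wmax, dif_pos hn]; exact hw.pos n _
      have hsum1 : ∑ i, plp n (w n) i = 1 := by
        unfold plp; rw [← Finset.sum_div]; exact div_self Wpos.ne'
      have h2 : ∑ i, (plp n (w n) i)^(2:ℕ) ≤ wmax n (w n)/(∑ k, w n k) := by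
        calc ∑ i, (plp n (w n) i)^(2:ℕ)
            = ∑ i, plp n (w n) i * plp n (w n) i := by
              exact Finset.sum_congr rfl (fun i _ => by ring)
          _ ≤ ∑ i, (wmax n (w n)/(∑ k, w n k)) * plp n (w n) i := by
              refine Finset.sum_le_sum (fun i _ => ?_)
              refine mul_le_mul_of_nonneg_right ?_ (hplpnn n hn i)
              exact div_le_div₀ hwmaxpos.le (hwmaxle n hn i) Wpos le_rfl
          _ = (wmax n (w n)/(∑ k, w n k)) * ∑ i, plp n (w n) i := by
              rw [← Finset.mul_sum]
          _ = wmax n (w n)/(∑ k, w n k) := by rw [hsum1, mul_one]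
      have h3 : wmax n (w n)/(∑ k, w n k) ≤ (d₂ * (n:ℝ)^((1:ℝ)/(β-1)))/(c₁*n) :=
        div_le_div₀ (hwmaxpos.trans_le hmax.2).le hmax.2 (by positivity) hlb
      have h4 : (d₂ * (n:ℝ)^((1:ℝ)/(β-1)))/(c₁*n) = (d₂/c₁) * (n:ℝ)^((1:ℝ)/(β-1) - 1) := by
        rw [Real.rpow_sub npos, Real.rpow_one]
        field_simp
      calc ∑ i, (plp n (w n) i)^(2:ℕ) ≤ wmax n (w n)/(∑ k, w n k) := h2
        _ ≤ (d₂ * (n:ℝ)^((1:ℝ)/(β-1)))/(c₁*n) := h3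
        _ = (d₂/c₁) * (n:ℝ)^((1:ℝ)/(β-1) - 1) := h4

end PLSAT
end
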